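/- arXiv:2012.04531 — 7 statements merged into one kernel-verified Lean document; each statement's English description precedes it below -/
import Mathlib

section
/- For integers 0 <= d <= n and any y in R^n, all zeros of the polynomial t -> e_d(t - y_1, ..., t - y_n) are real. -/
open Polynomial

private lemma card_roots_iterate_deriv (P : Polynomial ℝ) (k : ℕ) :
    Multiset.card P.roots ≤ Multiset.card ((derivative^[k]) P).roots + k := by
  induction k with
  | zero => simp
  | succ k ih =>
    rw [Function.iterate_succ_apply']
    calc Multiset.card P.roots ≤ Multiset.card ((derivative^[k]) P).roots + k := ih
    _ ≤ (Multiset.card (derivative ((derivative^[k]) P)).roots + 1) + k :=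
        Nat.add_le_add_right (card_roots_le_derivative _) k
    _ = Multiset.card (derivative ((derivative^[k]) P)).roots + (k + 1) := by ring

/-- For `0 ≤ d ≤ n` and `y ∈ ℝⁿ`, all (complex) zeros of the polynomial
`t ↦ e_d(t - y₁, …, t - y_n)` are real. -/
theorem esymm_shift_real_rooted (n d : ℕ) (hd : d ≤ n) (y : Fin n → ℝ) (z : ℂ)
    (hz : MvPolynomial.eval (fun i => z - (y i : ℂ)) (MvPolynomial.esymm (Fin n) ℂ d) = 0) :
    z.im = 0 := by
  rcases Nat.eq_zero_or_pos d with rfl | hd0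
  · simp [MvPolynomial.esymm_zero] at hz
  set k := n - d with hk
  have hz' : ∑ t ∈ Finset.powersetCard d (Finset.univ : Finset (Fin n)),
      ∏ i ∈ t, (z - (y i : ℂ)) = 0 := by
    simpa [MvPolynomial.esymm, map_sum, map_prod] using hz
  have hcard : (Finset.univ : Finset (Fin n)).card = n := by simp
  have hcoeff : (∏ i : Fin n, (X + C (z - (y i : ℂ)))).coeff k = 0 := by
    rw [Finset.prod_X_add_C_coeff _ _ (by omega : k ≤ (Finset.univ : Finset (Fin n)).card)]
    rw [show (Finset.univ : Finset (Fin n)).card - k = d by omega]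
    exact hz'
  set P : Polynomial ℝ := ∏ i : Fin n, (X - C (y i)) with hP
  have hPmap : P.map (algebraMap ℝ ℂ) = ∏ i : Fin n, (X - C ((y i : ℂ))) := by
    simp [hP, Polynomial.map_prod]
  have htay : Polynomial.taylor z (P.map (algebraMap ℝ ℂ))
      = ∏ i : Fin n, (X + C (z - (y i : ℂ))) := by
    rw [taylor_apply, hPmap, prod_comp]
    refine Finset.prod_congr rfl fun i _ => ?_
    rw [sub_comp, X_comp, C_comp, map_sub]
    ring
  have hQz : (Polynomial.hasseDeriv k (P.map (algebraMap ℝ ℂ))).eval z = 0 := by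
    rw [← taylor_coeff, htay]; exact hcoeff
  set Q : Polynomial ℝ := Polynomial.hasseDeriv k P with hQ
  have hQmap : Q.map (algebraMap ℝ ℂ) = Polynomial.hasseDeriv k (P.map (algebraMap ℝ ℂ)) := by
    ext m
    simp [hQ, Polynomial.hasseDeriv_coeff, Polynomial.coeff_map]
  -- roots of P
  have hProots : Multiset.card P.roots = n := by
    have hPm : P = ((Finset.univ.val.map y).map fun a => X - C a).prod := by
      simp [hP, Finset.prod_eq_multiset_prod, Multiset.map_map, Function.comp_def]
    rw [hPm, roots_multiset_prod_X_sub_C]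
    simp
  -- derivative^[k] P = k! • Q
  have hder : (derivative^[k]) P = (Nat.factorial k : ℝ) • Q := by
    rw [← Polynomial.factorial_smul_hasseDeriv (R := ℝ) k]
    simp [hQ, Nat.cast_smul_eq_nsmul]
  have hQroots : d ≤ Multiset.card Q.roots := by
    have h1 := card_roots_iterate_deriv P k
    rw [hder, roots_smul_nonzero _ (by positivity : (Nat.factorial k : ℝ) ≠ 0)] at h1
    omega
  have hQne : Q ≠ 0 := by
    intro h
    rw [h] at hQroots
    simp at hQroots
    omega
  have hPdeg : P.natDegree = n := by
    rw [hP, Polynomial.natDegree_prod _ _ (fun i _ => X_sub_C_ne_zero (y i))]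
    simp
  have hQdeg : Q.natDegree ≤ d := by
    have h := Polynomial.natDegree_hasseDeriv_le P k
    rw [← hQ, hPdeg] at h
    omega
  set Qc : Polynomial ℂ := Q.map (algebraMap ℝ ℂ) with hQc
  have hQcne : Qc ≠ 0 := by
    simpa [hQc, Polynomial.map_ne_zero_iff (algebraMap ℝ ℂ).injective] using hQne
  have hQcroots : Multiset.card Qc.roots = Q.natDegree := by
    rw [← Polynomial.natDegree_map (algebraMap ℝ ℂ)]
    exact (Polynomial.splits_iff_card_roots.mp (IsAlgClosed.splits Qc)).symm ▸ rfl
  have hle : Q.roots.map (algebraMap ℝ ℂ) ≤ Qc.roots := map_roots_le hQcne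
  have heq : Q.roots.map (algebraMap ℝ ℂ) = Qc.roots := by
    apply Multiset.eq_of_le_of_card_le hle
    rw [hQcroots, Multiset.card_map]
    calc Q.natDegree ≤ d := hQdeg
    _ ≤ Multiset.card Q.roots := hQroots
  have hzmem : z ∈ Qc.roots := by
    rw [Polynomial.mem_roots hQcne]
    show Polynomial.eval z Qc = 0
    rw [hQmap]
    exact hQz
  rw [← heq, Multiset.mem_map] at hzmem
  obtain ⟨x, _, hx⟩ := hzmem
  rw [← hx]
  simp
end

section
/- Let 0 <= d <= n and let y in R^n be such that no value occurs among the coordinates y_1,...,y_n more than n - d + 1 times. Then all zeros of the polynomial t -> e_d(t - y_1, ..., t - y_n) are real and pairwise distinct. -/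
open Polynomial Finset

private noncomputable def Qpoly (n : ℕ) (y : Fin n → ℝ) (m : ℕ) : Polynomial ℝ :=
  ∑ S ∈ Finset.univ.powersetCard m, ∏ i ∈ S, (X - C (y i))


-- helper: sum of counts over a finset is at most the card
private lemma sum_count_le' (s : Multiset ℝ) (F : Finset ℝ) :
    ∑ x ∈ F, s.count x ≤ Multiset.card s := by
  classical
  calc ∑ x ∈ F, s.count x ≤ ∑ x ∈ F ∪ s.toFinset, s.count x :=
        Finset.sum_le_sum_of_subset Finset.subset_union_left
    _ = ∑ x ∈ s.toFinset, s.count x := by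
        refine (Finset.sum_subset Finset.subset_union_right ?_).symm
        intro x _ hx
        simpa [Multiset.count_eq_zero] using hx
    _ = Multiset.card s := Multiset.toFinset_sum_count_eq s

private lemma rolle_step (q : Polynomial ℝ) (hq1 : 1 ≤ q.natDegree)
    (hcard : Multiset.card q.roots = q.natDegree) :
    Multiset.card (derivative q).roots = q.natDegree - 1 ∧
    ∀ a : ℝ, (derivative q).roots.count a ≤ max (q.roots.count a - 1) 1 := by
  classical
  set q' := derivative q with hq'
  have hcard' : Multiset.card q'.roots = q.natDegree - 1 := by
    have h1 : Multiset.card q'.roots ≤ q.natDegree - 1 :=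
      (q'.card_roots').trans (natDegree_derivative_le q)
    have h2 := q.card_roots_le_derivative
    rw [← hq'] at h2
    omega
  refine ⟨hcard', ?_⟩
  set A : Finset ℝ := q.roots.toFinset with hA
  set D : Finset ℝ := q'.roots.toFinset \ A with hD
  have hsum : ∑ x ∈ A ∪ D, q'.roots.count x ≤ q.natDegree - 1 := by
    rw [← hcard']; exact sum_count_le' _ _
  have hsplit : ∑ x ∈ A ∪ D, q'.roots.count x
      = ∑ x ∈ A, q'.roots.count x + ∑ x ∈ D, q'.roots.count x :=
    Finset.sum_union (Finset.disjoint_sdiff)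
  have hAlow : ∀ x ∈ A, q.roots.count x - 1 ≤ q'.roots.count x := by
    intro x _
    rw [count_roots, count_roots]
    exact q.rootMultiplicity_sub_one_le_derivative_rootMultiplicity x
  have hDlow : ∀ x ∈ D, 1 ≤ q'.roots.count x := by
    intro x hx
    have : x ∈ q'.roots.toFinset := (Finset.mem_sdiff.mp hx).1
    exact Multiset.one_le_count_iff_mem.mpr (Multiset.mem_toFinset.mp this)
  have hAsum : ∑ x ∈ A, (q.roots.count x - 1) + A.card = q.natDegree := by
    have : ∑ x ∈ A, (q.roots.count x - 1 + 1) = ∑ x ∈ A, q.roots.count x := by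
      refine Finset.sum_congr rfl fun x hx => ?_
      have : 1 ≤ q.roots.count x :=
        Multiset.one_le_count_iff_mem.mpr (Multiset.mem_toFinset.mp hx)
      omega
    rw [Finset.sum_add_distrib, Finset.sum_const, smul_eq_mul, mul_one] at this
    rw [this]
    rw [Multiset.toFinset_sum_count_eq, hcard]
  have hinter : A.card ≤ D.card + 1 :=
    q.card_roots_toFinset_le_card_roots_derivative_diff_roots_succ
  intro a
  by_cases haA : a ∈ A
  · -- show count a q'.roots ≤ count a q.roots - 1
    have e1 : ∑ x ∈ A, q'.roots.count x
        = ∑ x ∈ A.erase a, q'.roots.count x + q'.roots.count a :=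
      (Finset.sum_erase_add A _ haA).symm
    have e2 : ∑ x ∈ A, (q.roots.count x - 1)
        = ∑ x ∈ A.erase a, (q.roots.count x - 1) + (q.roots.count a - 1) :=
      (Finset.sum_erase_add A _ haA).symm
    have e3 : ∑ x ∈ A.erase a, (q.roots.count x - 1) ≤ ∑ x ∈ A.erase a, q'.roots.count x :=
      Finset.sum_le_sum fun x hx => hAlow x (Finset.mem_of_mem_erase hx)
    have e4 : D.card ≤ ∑ x ∈ D, q'.roots.count x := by
      rw [Finset.card_eq_sum_ones]
      exact Finset.sum_le_sum hDlow
    have hca : 1 ≤ q.roots.count a :=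
      Multiset.one_le_count_iff_mem.mpr (Multiset.mem_toFinset.mp haA)
    have hcardA : 1 ≤ A.card := Finset.card_pos.mpr ⟨a, haA⟩
    have : q'.roots.count a ≤ q.roots.count a - 1 := by omega
    omega
  · by_cases haD : a ∈ D
    · have e1 : ∑ x ∈ D, q'.roots.count x
          = ∑ x ∈ D.erase a, q'.roots.count x + q'.roots.count a :=
        (Finset.sum_erase_add D _ haD).symm
      have e2 : D.card - 1 ≤ ∑ x ∈ D.erase a, q'.roots.count x := by
        have := Finset.card_erase_of_mem haD
        calc D.card - 1 = (D.erase a).card := this.symm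
          _ = ∑ x ∈ D.erase a, 1 := Finset.card_eq_sum_ones _
          _ ≤ _ := Finset.sum_le_sum fun x hx => hDlow x (Finset.mem_of_mem_erase hx)
      have e3 : ∑ x ∈ A, (q.roots.count x - 1) ≤ ∑ x ∈ A, q'.roots.count x :=
        Finset.sum_le_sum hAlow
      have hcardD : 1 ≤ D.card := Finset.card_pos.mpr ⟨a, haD⟩
      have : q'.roots.count a ≤ 1 := by omega
      omega
    · have : a ∉ q'.roots.toFinset := by
        intro h
        exact haD (Finset.mem_sdiff.mpr ⟨h, haA⟩)
      have : q'.roots.count a = 0 := by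
        rw [Multiset.count_eq_zero]
        intro h
        exact this (Multiset.mem_toFinset.mpr h)
      omega

private lemma deriv_Qpoly (n : ℕ) (y : Fin n → ℝ) (m : ℕ) :
    derivative (Qpoly n y (m + 1)) = (n - m) • Qpoly n y m := by
  classical
  unfold Qpoly
  rw [derivative_sum]
  have hder : ∀ S : Finset (Fin n), derivative (∏ i ∈ S, (X - C (y i)))
      = ∑ i ∈ S, ∏ j ∈ S.erase i, (X - C (y j)) := by
    intro S
    rw [Finset.prod_eq_multiset_prod, derivative_prod, Finset.sum_eq_multiset_sum]
    congr 1
    refine Multiset.map_congr rfl fun i hi => ?_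
    simp [Finset.erase_val, Finset.prod_eq_multiset_prod]
  simp_rw [hder]
  rw [Finset.sum_sigma' (Finset.univ.powersetCard (m+1)) (fun S => S)
    (fun S i => ∏ j ∈ S.erase i, (X - C (y j)))]
  rw [show ((n - m) • ∑ S ∈ Finset.univ.powersetCard m, ∏ i ∈ S, (X - C (y i)))
      = ∑ T ∈ Finset.univ.powersetCard m, ∑ _i ∈ Tᶜ, ∏ j ∈ T, (X - C (y j)) by
    rw [Finset.smul_sum]
    refine Finset.sum_congr rfl fun T hT => ?_
    rw [Finset.sum_const]
    congr 1
    rw [Finset.card_compl, Fintype.card_fin, (Finset.mem_powersetCard.mp hT).2]]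
  rw [Finset.sum_sigma' (Finset.univ.powersetCard m) (fun T => Tᶜ)
    (fun T _i => ∏ j ∈ T, (X - C (y j)))]
  refine Finset.sum_nbij' (fun p => ⟨p.1.erase p.2, p.2⟩) (fun p => ⟨insert p.2 p.1, p.2⟩)
    ?_ ?_ ?_ ?_ ?_
  · rintro ⟨S, i⟩ hp
    simp only [Finset.mem_sigma, Finset.mem_powersetCard_univ] at hp ⊢
    refine ⟨?_, ?_⟩
    · rw [Finset.card_erase_of_mem hp.2, hp.1]; omega
    · simp [Finset.mem_compl]
  · rintro ⟨T, i⟩ hp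
    simp only [Finset.mem_sigma, Finset.mem_powersetCard_univ, Finset.mem_compl] at hp ⊢
    refine ⟨?_, Finset.mem_insert_self _ _⟩
    rw [Finset.card_insert_of_notMem hp.2, hp.1]
  · rintro ⟨S, i⟩ hp
    simp only [Finset.mem_sigma, Finset.mem_powersetCard_univ] at hp
    simp [Finset.insert_erase hp.2]
  · rintro ⟨T, i⟩ hp
    simp only [Finset.mem_sigma, Finset.mem_powersetCard_univ, Finset.mem_compl] at hp
    simp [Finset.erase_insert hp.2]
  · rintro ⟨S, i⟩ _
    rfl

private lemma Qpoly_base (n : ℕ) (y : Fin n → ℝ) :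
    Qpoly n y n ≠ 0 ∧ (Qpoly n y n).natDegree = n ∧
    (Qpoly n y n).roots = Finset.univ.val.map y := by
  classical
  have h1 : Qpoly n y n = ∏ i : Fin n, (X - C (y i)) := by
    unfold Qpoly
    rw [show (Finset.univ : Finset (Fin n)).powersetCard n
        = {Finset.univ} by simpa using Finset.powersetCard_self (Finset.univ : Finset (Fin n))]
    rw [Finset.sum_singleton]
  have h2 : Qpoly n y n = (((Finset.univ.val.map y)).map (fun a => X - C a)).prod := by
    rw [h1, Finset.prod_eq_multiset_prod, Multiset.map_map]
    rfl
  have hmonic : (Qpoly n y n).Monic := by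
    rw [h1]; exact monic_prod_of_monic _ _ fun i _ => monic_X_sub_C _
  refine ⟨hmonic.ne_zero, ?_, ?_⟩
  · rw [h1, natDegree_prod _ _ fun i _ => X_sub_C_ne_zero _]
    simp
  · rw [h2, roots_multiset_prod_X_sub_C]

private lemma Qpoly_ind (n d : ℕ) (y : Fin n → ℝ) (hd : d ≤ n)
    (hy : ∀ a : ℝ, (Finset.univ.filter fun i => y i = a).card ≤ n - d + 1) :
    ∀ k, k ≤ n - d →
      (Qpoly n y (n - k)) ≠ 0 ∧ (Qpoly n y (n - k)).natDegree = n - k ∧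
      Multiset.card (Qpoly n y (n - k)).roots = n - k ∧
      ∀ a, (Qpoly n y (n - k)).roots.count a ≤ (n - k) - d + 1 := by
  classical
  intro k
  induction k with
  | zero =>
    intro _
    obtain ⟨h0, h1, h2⟩ := Qpoly_base n y
    rw [Nat.sub_zero]
    refine ⟨h0, h1, ?_, ?_⟩
    · rw [h2]; simp
    · intro a
      rw [h2, Multiset.count_map]
      have := hy a
      have heq : (Multiset.filter (fun x => a = y x) Finset.univ.val)
          = (Finset.univ.filter fun i => y i = a).val := by
        rw [Finset.filter_val]
        exact Multiset.filter_congr fun x _ => by constructor <;> exact fun h => h.symm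
      rw [heq]
      exact hy a
  | succ k ih =>
    intro hk
    obtain ⟨h0, h1, h2, h3⟩ := ih (by omega)
    set m : ℕ := n - (k + 1) with hm
    have hmlt : m < n := by omega
    have hmd : d ≤ m := by omega
    have hmk : n - k = m + 1 := by omega
    rw [hmk] at h0 h1 h2 h3
    have hder := deriv_Qpoly n y m
    have hrs := rolle_step (Qpoly n y (m + 1)) (by rw [h1]; omega) (by rw [h1]; exact h2)
    have hC : ((n - m : ℕ) : ℝ) ≠ 0 := Nat.cast_ne_zero.mpr (by omega)
    have hQm0 : Qpoly n y m ≠ 0 := by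
      intro h
      rw [h, smul_zero] at hder
      have hcc := eq_C_of_derivative_eq_zero hder
      rw [hcc, natDegree_C] at h1
      omega
    have hsmul : derivative (Qpoly n y (m + 1)) = C ((n - m : ℕ) : ℝ) * Qpoly n y m := by
      rw [hder, nsmul_eq_mul, ← C_eq_natCast]
    have hroots : (derivative (Qpoly n y (m + 1))).roots = (Qpoly n y m).roots := by
      rw [hsmul, roots_C_mul _ hC]
    have hcardm : Multiset.card (Qpoly n y m).roots = m := by
      rw [← hroots, hrs.1, h1]
      omega
    have hdegm : (Qpoly n y m).natDegree = m := by
      refine le_antisymm ?_ ?_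
      · have hlc : ((n - m : ℕ) : ℝ) * (Qpoly n y m).leadingCoeff ≠ 0 :=
          mul_ne_zero hC (leadingCoeff_ne_zero.mpr hQm0)
        have := natDegree_C_mul_of_mul_ne_zero hlc
        rw [← this, ← hsmul]
        have := natDegree_derivative_le (Qpoly n y (m + 1))
        omega
      · have := (Qpoly n y m).card_roots'
        omega
    refine ⟨hQm0, hdegm, hcardm, ?_⟩
    intro a
    have h4 := hrs.2 a
    rw [hroots] at h4
    have h5 := h3 a
    refine h4.trans (max_le (by omega) (by omega))


/-- Let `0 ≤ d ≤ n` and let `y ∈ ℝⁿ` be such that no value occurs among the coordinates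
`y₁, …, y_n` more than `n - d + 1` times. Then all zeros of the polynomial
`t ↦ e_d(t - y₁, …, t - y_n)` are real and pairwise distinct (the polynomial is squarefree
with only real complex roots). -/
theorem esymm_shift_real_distinct_roots (n d : ℕ) (hd : d ≤ n) (y : Fin n → ℝ)
    (hy : ∀ a : ℝ, (Finset.univ.filter fun i => y i = a).card ≤ n - d + 1) :
    (∀ z : ℂ,
        ((∑ S ∈ Finset.univ.powersetCard d,
            ∏ i ∈ S, (Polynomial.X - Polynomial.C (y i))).map (algebraMap ℝ ℂ)).IsRoot z →
          z.im = 0) ∧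
    Squarefree (∑ S ∈ Finset.univ.powersetCard d,
        ∏ i ∈ S, (Polynomial.X - Polynomial.C (y i))) := by
  classical
  have hQdef : (∑ S ∈ Finset.univ.powersetCard d,
      ∏ i ∈ S, (Polynomial.X - Polynomial.C (y i))) = Qpoly n y d := rfl
  rw [hQdef]
  obtain ⟨hQ0, hdeg, hcard, hcount⟩ := Qpoly_ind n d y hd hy (n - d) le_rfl
  rw [show n - (n - d) = d by omega] at hQ0 hdeg hcard hcount
  have hsplits : (Qpoly n y d).Splits :=
    splits_iff_card_roots.mpr (by rw [hdeg]; exact hcard)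
  have hnodup : (Qpoly n y d).roots.Nodup := by
    refine Multiset.nodup_iff_count_le_one.mpr fun a => ?_
    have := hcount a
    omega
  have hsep : (Qpoly n y d).Separable :=
    (nodup_roots_iff_of_splits hQ0 hsplits).mp hnodup
  refine ⟨?_, hsep.squarefree⟩
  intro z hz
  have hmapne : (Qpoly n y d).map (algebraMap ℝ ℂ) ≠ 0 :=
    (Polynomial.map_ne_zero_iff (algebraMap ℝ ℂ).injective).mpr hQ0
  have hzmem : z ∈ ((Qpoly n y d).map (algebraMap ℝ ℂ)).roots :=
    (mem_roots hmapne).mpr hz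
  rw [hsplits.roots_map] at hzmem
  obtain ⟨a, _, ha⟩ := Multiset.mem_map.mp hzmem
  rw [← ha, show (algebraMap ℝ ℂ) a = (a : ℂ) from rfl]
  exact Complex.ofReal_im a
end

section
/- If alpha is a root of multiplicity k of the (m)th derivative p^{(m)} of a monic real polynomial p of degree n with all real roots, and k >= 2, then alpha is a root of p of multiplicity k + m. -/
open Polynomial

private lemma natDegree_deriv_aux (p : Polynomial ℝ) (hp : derivative p ≠ 0) :
    (derivative p).natDegree = p.natDegree - 1 := by
  have h0 : 0 < p.natDegree := by
    rcases Nat.eq_zero_or_pos p.natDegree with h | h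
    · obtain ⟨a, ha⟩ := natDegree_eq_zero.mp h
      exact absurd (by rw [← ha, derivative_C]) hp
    · exact h
  exact natDegree_eq_of_degree_eq_some (degree_derivative_eq p h0)

private lemma splits_deriv_aux (p : Polynomial ℝ) (hsplit : p.Splits)
    (hp : derivative p ≠ 0) : (derivative p).Splits := by
  rw [splits_iff_card_roots] at hsplit ⊢
  have h1 : Multiset.card p.roots ≤ Multiset.card (derivative p).roots + 1 :=
    card_roots_le_derivative p
  have h2 : Multiset.card (derivative p).roots ≤ (derivative p).natDegree :=
    card_roots' _
  have h3 := natDegree_deriv_aux p hp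
  have h0 : 0 < p.natDegree := by
    rcases Nat.eq_zero_or_pos p.natDegree with h | h
    · obtain ⟨a, ha⟩ := natDegree_eq_zero.mp h
      exact absurd (by rw [← ha, derivative_C]) hp
    · exact h
  omega

private lemma isRoot_of_two_le_deriv (p : Polynomial ℝ) (α : ℝ)
    (hsplit : p.Splits) (h2 : 2 ≤ (derivative p).rootMultiplicity α) :
    p.IsRoot α := by
  by_contra hroot
  have hd0 : derivative p ≠ 0 := by
    intro h
    rw [h, rootMultiplicity_zero] at h2
    omega
  have hp0 : p ≠ 0 := by
    intro h
    rw [h, map_zero] at hd0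
    exact hd0 rfl
  set n := p.natDegree with hn
  set F := p.roots.toFinset with hF
  set D := (derivative p).roots.toFinset \ F with hD
  have hcardp : Multiset.card p.roots = n := splits_iff_card_roots.mp hsplit
  have hcardp' : Multiset.card (derivative p).roots = n - 1 := by
    rw [splits_iff_card_roots.mp (splits_deriv_aux p hsplit hd0), natDegree_deriv_aux p hd0]
  have h0 : 0 < n := by
    rcases Nat.eq_zero_or_pos n with h | h
    · obtain ⟨a, ha⟩ := natDegree_eq_zero.mp h
      exact absurd (by rw [← ha, derivative_C]) hd0
    · exact h
  -- sum of multiplicities of p over F is n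
  have hsumF : ∑ x ∈ F, p.roots.count x = n := by
    rw [Multiset.toFinset_sum_count_eq, hcardp]
  -- each root of p has multiplicity ≥ 1
  have hge1 : ∀ x ∈ F, 1 ≤ p.roots.count x := fun x hx =>
    Multiset.count_pos.mpr (Multiset.mem_toFinset.mp hx)
  -- derivative multiplicity at roots of p
  have hderivF : ∀ x ∈ F, (derivative p).rootMultiplicity x = p.roots.count x - 1 := by
    intro x hx
    rw [count_roots]
    exact derivative_rootMultiplicity_of_root
      ((mem_roots hp0).mp (Multiset.mem_toFinset.mp hx))
  -- sum over F of derivative multiplicities plus s equals n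
  have hsumF' : ∑ x ∈ F, (derivative p).rootMultiplicity x + F.card = n := by
    calc ∑ x ∈ F, (derivative p).rootMultiplicity x + F.card
        = ∑ x ∈ F, (p.roots.count x - 1) + ∑ x ∈ F, 1 := by
          rw [Finset.sum_congr rfl hderivF, Finset.sum_const, smul_eq_mul, mul_one]
      _ = ∑ x ∈ F, (p.roots.count x - 1 + 1) := by rw [Finset.sum_add_distrib]
      _ = ∑ x ∈ F, p.roots.count x := by
          refine Finset.sum_congr rfl fun x hx => ?_
          have := hge1 x hx; omega
      _ = n := hsumF
  -- total derivative root count splits as F part plus D part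
  have htotal : ∑ x ∈ F, (derivative p).roots.count x + ∑ x ∈ D, (derivative p).roots.count x
      = n - 1 := by
    rw [← Finset.sum_union (Finset.disjoint_sdiff : Disjoint F ((derivative p).roots.toFinset \ F))]
    have hsub : (derivative p).roots.toFinset ⊆ F ∪ D := by
      intro x hx
      by_cases h : x ∈ F
      · exact Finset.mem_union_left _ h
      · exact Finset.mem_union_right _ (Finset.mem_sdiff.mpr ⟨hx, h⟩)
    rw [← Finset.sum_subset hsub, Multiset.toFinset_sum_count_eq, hcardp']
    intro x _ hx
    exact Multiset.count_eq_zero.mpr (fun h => hx (Multiset.mem_toFinset.mpr h))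
  -- Rolle interleaving
  have hrolle : F.card ≤ D.card + 1 :=
    card_roots_toFinset_le_card_roots_derivative_diff_roots_succ p
  -- α ∈ D with count ≥ 2
  have hαD : α ∈ D := by
    refine Finset.mem_sdiff.mpr ⟨Multiset.mem_toFinset.mpr ?_, fun h => ?_⟩
    · exact (mem_roots hd0).mpr ((rootMultiplicity_pos hd0).mp (by omega))
    · exact hroot ((mem_roots hp0).mp (Multiset.mem_toFinset.mp h))
  have hαcount : 2 ≤ (derivative p).roots.count α := by rw [count_roots]; exact h2
  -- sum over D is at least card D + 1
  have hDsum : D.card + 1 ≤ ∑ x ∈ D, (derivative p).roots.count x := by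
    rw [← Finset.sum_erase_add D _ hαD]
    have h1 : (D.erase α).card ≤ ∑ x ∈ D.erase α, (derivative p).roots.count x := by
      rw [Finset.card_eq_sum_ones]
      refine Finset.sum_le_sum fun x hx => ?_
      exact Multiset.count_pos.mpr (Multiset.mem_toFinset.mp
        (Finset.mem_sdiff.mp (Finset.mem_of_mem_erase hx)).1)
    have h2' : (D.erase α).card = D.card - 1 := Finset.card_erase_of_mem hαD
    have hDpos : 0 < D.card := Finset.card_pos.mpr ⟨α, hαD⟩
    omega
  -- contradiction
  have hFsum : ∑ x ∈ F, (derivative p).roots.count x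
      = ∑ x ∈ F, (derivative p).rootMultiplicity x := by
    exact Finset.sum_congr rfl fun x _ => count_roots _
  omega

private lemma rootMultiplicity_of_two_le_deriv (p : Polynomial ℝ) (α : ℝ)
    (hsplit : p.Splits) (h2 : 2 ≤ (derivative p).rootMultiplicity α) :
    p.rootMultiplicity α = (derivative p).rootMultiplicity α + 1 := by
  have hroot := isRoot_of_two_le_deriv p α hsplit h2
  have hp0 : p ≠ 0 := by
    intro h
    rw [h, map_zero, rootMultiplicity_zero] at h2
    omega
  have h := derivative_rootMultiplicity_of_root hroot
  have hpos : 0 < p.rootMultiplicity α := (rootMultiplicity_pos hp0).mpr hroot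
  omega

private lemma main_aux (m : ℕ) : ∀ (p : Polynomial ℝ) (k : ℕ) (α : ℝ),
    p.Splits → 2 ≤ k →
    (Polynomial.derivative^[m] p).rootMultiplicity α = k →
    p.rootMultiplicity α = k + m := by
  induction m with
  | zero => intro p k α _ _ h; simpa using h
  | succ m ih =>
    intro p k α hsplit hk hmult
    rw [Function.iterate_succ_apply] at hmult
    have hd0 : derivative p ≠ 0 := by
      intro h
      rw [h] at hmult
      simp only [iterate_map_zero, rootMultiplicity_zero] at hmult
      omega
    have hds := splits_deriv_aux p hsplit hd0
    have hder : (derivative p).rootMultiplicity α = k + m := ih (derivative p) k α hds hk hmult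
    have := rootMultiplicity_of_two_le_deriv p α hsplit (by omega)
    omega

/-- If `α` is a root of multiplicity `k ≥ 2` of the `m`-th derivative `p⁽ᵐ⁾` of a monic real
polynomial `p` of degree `n ≥ m` with all real roots, then `α` is a root of `p` of
multiplicity `k + m`. -/
theorem rootMultiplicity_iterated_deriv (p : Polynomial ℝ) (n m k : ℕ) (α : ℝ)
    (hmonic : p.Monic) (hdeg : p.natDegree = n) (hmn : m ≤ n)
    (hsplit : (p.map (RingHom.id ℝ)).Splits)
    (hk : 2 ≤ k)
    (hmult : (Polynomial.derivative^[m] p).rootMultiplicity α = k) :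
    p.rootMultiplicity α = k + m := by
  exact main_aux m p k α (by simpa using hsplit) hk hmult
end

section
/- Let C be a closed subset of a finite-dimensional real vector space V, and let L_1, L_2 be linear operators on V such that e^{s L_i} maps C into C for all s >= 0 and i = 1,2. Then e^{s(L_1 + L_2)} maps C into C for all s >= 0. -/
open NormedSpace

section aux

variable {A : Type*} [NormedRing A] [NormOneClass A] [NormedAlgebra ℝ A] [CompleteSpace A]

lemma aux_norm_exp_le (x : A) : ‖exp x‖ ≤ Real.exp ‖x‖ := by
  rw [exp_eq_tsum ℝ]
  refine (norm_tsum_le_tsum_norm (norm_expSeries_summable' x)).trans ?_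
  rw [Real.exp_eq_exp_ℝ, exp_eq_tsum_div]
  refine Summable.tsum_le_tsum ?_ (norm_expSeries_summable' x)
    (Real.summable_pow_div_factorial ‖x‖)
  intro n
  rw [norm_smul, norm_inv, Real.norm_natCast, div_eq_inv_mul]
  gcongr
  exact norm_pow_le x n

lemma aux_remainder (x : A) : ‖exp x - 1 - x‖ ≤ ‖x‖ ^ 2 * Real.exp ‖x‖ := by
  have hs := NormedSpace.exp_series_hasSum_exp' (𝕂 := ℝ) x
  have h2 : HasSum (fun n : ℕ => ((Nat.factorial (n + 2) : ℝ))⁻¹ • x ^ (n + 2))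
      (exp x - 1 - x) := by
    have := (hasSum_nat_add_iff'
      (f := fun n : ℕ => ((Nat.factorial n : ℝ))⁻¹ • x ^ n) 2).2 hs
    simpa [Finset.sum_range_succ, Nat.factorial, sub_sub] using this
  have hsum : Summable fun n : ℕ => ‖((Nat.factorial (n + 2) : ℝ))⁻¹ • x ^ (n + 2)‖ :=
    (norm_expSeries_summable' (𝕂 := ℝ) x).comp_injective (add_left_injective 2)
  calc ‖exp x - 1 - x‖
      = ‖∑' n : ℕ, ((Nat.factorial (n + 2) : ℝ))⁻¹ • x ^ (n + 2)‖ := by rw [h2.tsum_eq]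
    _ ≤ ∑' n : ℕ, ‖((Nat.factorial (n + 2) : ℝ))⁻¹ • x ^ (n + 2)‖ :=
        norm_tsum_le_tsum_norm hsum
    _ ≤ ∑' n : ℕ, ‖x‖ ^ 2 * (‖x‖ ^ n / Nat.factorial n) := by
        refine Summable.tsum_le_tsum ?_ hsum ((Real.summable_pow_div_factorial ‖x‖).mul_left _)
        intro n
        rw [norm_smul, norm_inv, Real.norm_natCast]
        calc ((Nat.factorial (n + 2) : ℝ))⁻¹ * ‖x ^ (n + 2)‖
            ≤ ((Nat.factorial n : ℝ))⁻¹ * ‖x‖ ^ (n + 2) := by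
              gcongr
              · omega
              · exact norm_pow_le x _
          _ = ‖x‖ ^ 2 * (‖x‖ ^ n / Nat.factorial n) := by rw [pow_add]; ring
    _ = ‖x‖ ^ 2 * ∑' n : ℕ, (‖x‖ ^ n / Nat.factorial n) := tsum_mul_left
    _ = ‖x‖ ^ 2 * Real.exp ‖x‖ := by rw [Real.exp_eq_exp_ℝ, exp_eq_tsum_div]

lemma aux_prod (x y : A) :
    ‖exp x * exp y - exp (x + y)‖ ≤
      (‖x‖ + ‖y‖) ^ 2 * (4 + (‖x‖ + ‖y‖)) * Real.exp (‖x‖ + ‖y‖) := by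
  have hx : ‖x‖ ≤ ‖x‖ + ‖y‖ := le_add_of_nonneg_right (norm_nonneg y)
  have hy : ‖y‖ ≤ ‖x‖ + ‖y‖ := le_add_of_nonneg_left (norm_nonneg x)
  have hs0 : 0 ≤ ‖x‖ + ‖y‖ := add_nonneg (norm_nonneg x) (norm_nonneg y)
  set s := ‖x‖ + ‖y‖ with hs
  set E := Real.exp s with hE
  have hE1 : (1 : ℝ) ≤ E := Real.one_le_exp hs0
  have key : exp x * exp y - exp (x + y) =
      x * y + x * (exp y - 1 - y) + (exp y - 1 - y)
        + (exp x - 1 - x) * exp y - (exp (x + y) - 1 - (x + y)) := by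
    noncomm_ring
  have bR : ‖exp (x + y) - 1 - (x + y)‖ ≤ s ^ 2 * E := by
    refine (aux_remainder (x + y)).trans ?_
    have h1 : ‖x + y‖ ≤ s := norm_add_le x y
    have h2 : Real.exp ‖x + y‖ ≤ E := Real.exp_le_exp.2 h1
    have h3 : ‖x + y‖ ^ 2 ≤ s ^ 2 := by gcongr
    exact mul_le_mul h3 h2 (Real.exp_nonneg _) (by positivity)
  have bxy : ‖x * y‖ ≤ s ^ 2 * E := by
    calc ‖x * y‖ ≤ ‖x‖ * ‖y‖ := norm_mul_le x y
      _ ≤ s * s := mul_le_mul hx hy (norm_nonneg _) hs0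
      _ = s ^ 2 * 1 := by ring
      _ ≤ s ^ 2 * E := by gcongr
  have bRy : ‖exp y - 1 - y‖ ≤ s ^ 2 * E := by
    refine (aux_remainder y).trans ?_
    have h2 : Real.exp ‖y‖ ≤ E := Real.exp_le_exp.2 hy
    have h3 : ‖y‖ ^ 2 ≤ s ^ 2 := by gcongr
    exact mul_le_mul h3 h2 (Real.exp_nonneg _) (by positivity)
  have bxRy : ‖x * (exp y - 1 - y)‖ ≤ s ^ 3 * E := by
    calc ‖x * (exp y - 1 - y)‖ ≤ ‖x‖ * ‖exp y - 1 - y‖ := norm_mul_le _ _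
      _ ≤ s * (s ^ 2 * E) := mul_le_mul hx bRy (norm_nonneg _) hs0
      _ = s ^ 3 * E := by ring
  have bRxE : ‖(exp x - 1 - x) * exp y‖ ≤ s ^ 2 * E := by
    calc ‖(exp x - 1 - x) * exp y‖
        ≤ ‖exp x - 1 - x‖ * ‖exp y‖ := norm_mul_le _ _
      _ ≤ (‖x‖ ^ 2 * Real.exp ‖x‖) * Real.exp ‖y‖ :=
          mul_le_mul (aux_remainder x) (aux_norm_exp_le y) (norm_nonneg _) (by positivity)
      _ = ‖x‖ ^ 2 * Real.exp s := by rw [hs, Real.exp_add]; ring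
      _ ≤ s ^ 2 * E := by rw [hE]; gcongr
  have tri : ‖x * y + x * (exp y - 1 - y) + (exp y - 1 - y)
        + (exp x - 1 - x) * exp y - (exp (x + y) - 1 - (x + y))‖
      ≤ ‖x * y‖ + ‖x * (exp y - 1 - y)‖ + ‖exp y - 1 - y‖
        + ‖(exp x - 1 - x) * exp y‖ + ‖exp (x + y) - 1 - (x + y)‖ := by
    refine (norm_sub_le _ _).trans ?_
    gcongr
    refine (norm_add_le _ _).trans ?_
    gcongr
    refine (norm_add_le _ _).trans ?_
    gcongr
    exact norm_add_le _ _
  calc ‖exp x * exp y - exp (x + y)‖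
      ≤ ‖x * y‖ + ‖x * (exp y - 1 - y)‖ + ‖exp y - 1 - y‖
        + ‖(exp x - 1 - x) * exp y‖ + ‖exp (x + y) - 1 - (x + y)‖ := by
        rw [key]; exact tri
    _ ≤ s ^ 2 * E + s ^ 3 * E + s ^ 2 * E + s ^ 2 * E + s ^ 2 * E := by
        gcongr
    _ = s ^ 2 * (4 + s) * E := by ring

lemma aux_pow_sub_pow (u v : A) (K : ℝ) (hu : ‖u‖ ≤ K) (hv : ‖v‖ ≤ K) :
    ∀ n : ℕ, ‖u ^ (n + 1) - v ^ (n + 1)‖ ≤ (n + 1 : ℝ) * K ^ n * ‖u - v‖ := by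
  have hK : 0 ≤ K := (norm_nonneg u).trans hu
  intro n
  induction n with
  | zero => simp
  | succ n ih =>
    have key : u ^ (n + 1 + 1) - v ^ (n + 1 + 1) =
        u * (u ^ (n + 1) - v ^ (n + 1)) + (u - v) * v ^ (n + 1) := by
      rw [pow_succ' u (n + 1), pow_succ' v (n + 1), mul_sub, sub_mul]
      abel
    calc ‖u ^ (n + 1 + 1) - v ^ (n + 1 + 1)‖
        ≤ ‖u * (u ^ (n + 1) - v ^ (n + 1))‖ + ‖(u - v) * v ^ (n + 1)‖ := by
          rw [key]; exact norm_add_le _ _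
      _ ≤ ‖u‖ * ‖u ^ (n + 1) - v ^ (n + 1)‖ + ‖u - v‖ * ‖v ^ (n + 1)‖ :=
          add_le_add (norm_mul_le _ _) (norm_mul_le _ _)
      _ ≤ K * ((n + 1 : ℝ) * K ^ n * ‖u - v‖) + ‖u - v‖ * K ^ (n + 1) := by
          gcongr
          exact (norm_pow_le v _).trans (by gcongr)
      _ = ((n : ℝ) + 2) * K ^ (n + 1) * ‖u - v‖ := by ring
      _ = ((n + 1 : ℕ) + 1 : ℝ) * K ^ (n + 1) * ‖u - v‖ := by push_cast; ring

lemma aux_trotter (x y : A) :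
    Filter.Tendsto (fun n : ℕ => (exp ((n : ℝ)⁻¹ • x) * exp ((n : ℝ)⁻¹ • y)) ^ n)
      Filter.atTop (nhds (exp (x + y))) := by
  set a := ‖x‖ with ha
  set b := ‖y‖ with hb
  have hab : 0 ≤ a + b := add_nonneg (norm_nonneg x) (norm_nonneg y)
  set Cst : ℝ := (a + b) ^ 2 * (4 + (a + b)) * Real.exp (a + b) * Real.exp (a + b) with hCst
  rw [tendsto_iff_norm_sub_tendsto_zero]
  apply squeeze_zero' (Filter.Eventually.of_forall fun n => norm_nonneg _)
    (g := fun n : ℕ => Cst * (n : ℝ)⁻¹)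
  · filter_upwards [Filter.eventually_ge_atTop 1] with n hn
    obtain ⟨m, rfl⟩ : ∃ m, n = m + 1 := ⟨n - 1, by omega⟩
    have hm1 : (0 : ℝ) < ((m + 1 : ℕ) : ℝ) := by positivity
    set c : ℝ := ((m + 1 : ℕ) : ℝ)⁻¹ with hc
    have hc0 : 0 < c := by rw [hc]; positivity
    have hc1 : c ≤ 1 := by
      rw [hc]
      refine inv_le_one_of_one_le₀ ?_
      exact_mod_cast Nat.one_le_iff_ne_zero.2 (Nat.succ_ne_zero m)
    have hnx : ‖c • x‖ = c * a := by rw [norm_smul, Real.norm_eq_abs, abs_of_pos hc0, ha]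
    have hny : ‖c • y‖ = c * b := by rw [norm_smul, Real.norm_eq_abs, abs_of_pos hc0, hb]
    set u := exp (c • x) * exp (c • y) with hu
    set v := exp (c • (x + y)) with hv
    set K := Real.exp (c * (a + b)) with hK
    have hK1 : 1 ≤ K := Real.one_le_exp (by positivity)
    have hKu : ‖u‖ ≤ K := by
      calc ‖u‖ ≤ ‖exp (c • x)‖ * ‖exp (c • y)‖ := norm_mul_le _ _
        _ ≤ Real.exp ‖c • x‖ * Real.exp ‖c • y‖ :=
            mul_le_mul (aux_norm_exp_le _) (aux_norm_exp_le _) (norm_nonneg _)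
              (Real.exp_nonneg _)
        _ = K := by rw [hnx, hny, ← Real.exp_add, hK]; congr 1; ring
    have hKv : ‖v‖ ≤ K := by
      rw [hv, hK]
      refine (aux_norm_exp_le _).trans (Real.exp_le_exp.2 ?_)
      rw [norm_smul, Real.norm_eq_abs, abs_of_pos hc0, ha, hb]
      exact mul_le_mul_of_nonneg_left (norm_add_le x y) hc0.le
    have hvn : v ^ (m + 1) = exp (x + y) := by
      letI : NormedAlgebra ℚ A := NormedAlgebra.restrictScalars ℚ ℝ A
      rw [hv, ← exp_nsmul]
      congr 1
      rw [← Nat.cast_smul_eq_nsmul ℝ, smul_smul, hc, mul_inv_cancel₀ hm1.ne', one_smul]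
    have huv : ‖u - v‖ ≤ c ^ 2 * ((a + b) ^ 2 * (4 + (a + b)) * Real.exp (a + b)) := by
      have h := aux_prod (c • x) (c • y)
      rw [← smul_add, hnx, hny, show c * a + c * b = c * (a + b) by ring] at h
      refine h.trans ?_
      have h1 : c * (a + b) ≤ a + b := by
        calc c * (a + b) ≤ 1 * (a + b) := mul_le_mul_of_nonneg_right hc1 hab
          _ = a + b := one_mul _
      calc (c * (a + b)) ^ 2 * (4 + c * (a + b)) * Real.exp (c * (a + b))
          ≤ (c * (a + b)) ^ 2 * (4 + (a + b)) * Real.exp (a + b) := by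
            have e1 : Real.exp (c * (a + b)) ≤ Real.exp (a + b) := Real.exp_le_exp.2 h1
            gcongr
        _ = c ^ 2 * ((a + b) ^ 2 * (4 + (a + b)) * Real.exp (a + b)) := by ring
    have hKpow : K ^ m ≤ Real.exp (a + b) := by
      calc K ^ m ≤ K ^ (m + 1) := pow_le_pow_right₀ hK1 (Nat.le_succ m)
        _ = Real.exp ((m + 1 : ℕ) * (c * (a + b))) := by rw [hK, ← Real.exp_nat_mul]
        _ ≤ Real.exp (a + b) := by
            refine Real.exp_le_exp.2 ?_
            rw [← mul_assoc, hc, mul_inv_cancel₀ hm1.ne', one_mul]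
    have hcsq : ((m + 1 : ℕ) : ℝ) * c ^ 2 = c := by
      rw [hc]
      field_simp
    calc ‖u ^ (m + 1) - exp (x + y)‖ = ‖u ^ (m + 1) - v ^ (m + 1)‖ := by rw [hvn]
      _ ≤ ((m : ℝ) + 1) * K ^ m * ‖u - v‖ := aux_pow_sub_pow u v K hKu hKv m
      _ ≤ ((m : ℝ) + 1) * Real.exp (a + b) *
            (c ^ 2 * ((a + b) ^ 2 * (4 + (a + b)) * Real.exp (a + b))) := by
          have hm0 : (0 : ℝ) ≤ (m : ℝ) + 1 := by positivity
          gcongr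
      _ = Cst * (((m + 1 : ℕ) : ℝ) * c ^ 2) := by rw [hCst]; push_cast; ring
      _ = Cst * c := by rw [hcsq]
  · have h0 : Filter.Tendsto (fun n : ℕ => Cst * (n : ℝ)⁻¹) Filter.atTop (nhds (Cst * 0)) :=
      tendsto_inv_atTop_nhds_zero_nat.const_mul Cst
    simpa using h0

end aux

/-- Let `C` be a closed subset of a finite-dimensional real vector space `V`, and let
`L₁, L₂` be linear operators on `V` such that `e^{s Lᵢ}` maps `C` into `C` for all `s ≥ 0`.
Then `e^{s(L₁ + L₂)}` maps `C` into `C` for all `s ≥ 0`. -/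
theorem exp_sum_preserves_closed_set (V : Type*) [NormedAddCommGroup V] [NormedSpace ℝ V]
    [FiniteDimensional ℝ V] (C : Set V) (hC : IsClosed C)
    (L₁ L₂ : V →L[ℝ] V)
    (h₁ : ∀ s : ℝ, 0 ≤ s → ∀ x ∈ C, NormedSpace.exp (s • L₁) x ∈ C)
    (h₂ : ∀ s : ℝ, 0 ≤ s → ∀ x ∈ C, NormedSpace.exp (s • L₂) x ∈ C) :
    ∀ s : ℝ, 0 ≤ s → ∀ x ∈ C, NormedSpace.exp (s • (L₁ + L₂)) x ∈ C := by
  intro s hs x hx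
  rcases subsingleton_or_nontrivial V with hV | hV
  · have : NormedSpace.exp (s • (L₁ + L₂)) x = x := Subsingleton.elim _ _
    rwa [this]
  · set A := s • L₁ with hA
    set B := s • L₂ with hB
    have hAB : s • (L₁ + L₂) = A + B := smul_add s L₁ L₂
    rw [hAB]
    have hmem : ∀ n : ℕ, ∀ k : ℕ, ∀ y ∈ C,
        ((exp ((n : ℝ)⁻¹ • A) * exp ((n : ℝ)⁻¹ • B)) ^ k) y ∈ C := by
      intro n k
      induction k with
      | zero => intro y hy; simpa using hy
      | succ k ih =>
        intro y hy
        have hsn : 0 ≤ s * (n : ℝ)⁻¹ := by positivity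
        have h1 : ((n : ℝ)⁻¹ • A) = (s * (n : ℝ)⁻¹) • L₁ := by
          rw [hA, smul_smul, mul_comm]
        have h2 : ((n : ℝ)⁻¹ • B) = (s * (n : ℝ)⁻¹) • L₂ := by
          rw [hB, smul_smul, mul_comm]
        have step : (exp ((n : ℝ)⁻¹ • A) * exp ((n : ℝ)⁻¹ • B)) y ∈ C := by
          rw [ContinuousLinearMap.mul_apply, h1, h2]
          exact h₁ _ hsn _ (h₂ _ hsn y hy)
        have hrw : ((exp ((n : ℝ)⁻¹ • A) * exp ((n : ℝ)⁻¹ • B)) ^ (k + 1)) y =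
            ((exp ((n : ℝ)⁻¹ • A) * exp ((n : ℝ)⁻¹ • B)) ^ k)
              ((exp ((n : ℝ)⁻¹ • A) * exp ((n : ℝ)⁻¹ • B)) y) := by
          rw [pow_succ, ContinuousLinearMap.mul_apply]
        rw [hrw]
        exact ih _ step
    have htrot := aux_trotter (A := V →L[ℝ] V) A B
    have happ : Filter.Tendsto
        (fun n : ℕ => ((exp ((n : ℝ)⁻¹ • A) * exp ((n : ℝ)⁻¹ • B)) ^ n) x)
        Filter.atTop (nhds (exp (A + B) x)) :=
      ((ContinuousLinearMap.apply ℝ V x).continuous.tendsto _).comp htrot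
    exact hC.mem_of_tendsto happ (Filter.Eventually.of_forall fun n => hmem n n x hx)
end

section
/- A homogeneous polynomial f of degree d in n variables with nonnegative coefficients is real stable if and only if for every y in R^n the univariate polynomial t -> f(t·1 - y) has only real zeros, and by homogeneity this is equivalent to requiring it only for all y on the sphere { y in R^n : sum y_i = 0, sum y_i^2 = 1 }. -/
open MvPolynomial

open MvPolynomial Polynomial Complex Filter Topology

namespace RSAux


variable {n d : ℕ} {f : MvPolynomial (Fin n) ℝ}

/-- support degree fact transferred to the complexified polynomial -/
lemma support_deg (hf : f.IsHomogeneous d) {m : Fin n →₀ ℕ}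
    (hm : MvPolynomial.coeff m (MvPolynomial.map (algebraMap ℝ ℂ) f) ≠ 0) :
    ∑ i ∈ m.support, m i = d := by
  have h1 : MvPolynomial.coeff m f ≠ 0 := by
    intro h0
    apply hm
    rw [MvPolynomial.coeff_map, h0, map_zero]
  have := hf h1
  rw [show (Finsupp.weight 1 : (Fin n →₀ ℕ) →+ ℕ) = Finsupp.weight (fun _ => 1) from rfl,
    ← Finsupp.degree_eq_weight_one] at this
  exact this

/-- homogeneous scaling of evaluation -/
lemma eval_smul (hf : f.IsHomogeneous d) (c : ℂ) (w : Fin n → ℂ) :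
    MvPolynomial.eval (fun i => c * w i) (MvPolynomial.map (algebraMap ℝ ℂ) f)
      = c ^ d * MvPolynomial.eval w (MvPolynomial.map (algebraMap ℝ ℂ) f) := by
  set F := MvPolynomial.map (algebraMap ℝ ℂ) f with hF
  rw [MvPolynomial.eval_eq, MvPolynomial.eval_eq, Finset.mul_sum]
  apply Finset.sum_congr rfl
  intro m hm
  have hd : ∑ i ∈ m.support, m i = d :=
    support_deg hf (by simpa using (MvPolynomial.mem_support_iff.mp hm))
  rw [← hd]
  rw [Finset.prod_congr rfl (fun i _ => mul_pow c (w i) (m i))]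
  rw [Finset.prod_mul_distrib, Finset.prod_pow_eq_pow_sum]
  ring




lemma eval_real (y : Fin n → ℝ) :
    MvPolynomial.eval (fun i => (y i : ℂ)) (MvPolynomial.map (algebraMap ℝ ℂ) f)
      = ((MvPolynomial.eval y f : ℝ) : ℂ) := by
  rw [MvPolynomial.eval_map]
  have h := MvPolynomial.eval₂_comp_left (algebraMap ℝ ℂ) (RingHom.id ℝ) y f
  simp only [RingHomCompTriple.comp_eq] at h
  have h2 : (⇑(algebraMap ℝ ℂ) ∘ y) = fun i => ((y i : ℝ) : ℂ) := rfl
  rw [h2] at h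
  rw [← h]
  simp [MvPolynomial.eval₂_id]

lemma eval_conj (w : Fin n → ℂ) :
    (starRingEnd ℂ) (MvPolynomial.eval w (MvPolynomial.map (algebraMap ℝ ℂ) f))
      = MvPolynomial.eval (fun i => (starRingEnd ℂ) (w i)) (MvPolynomial.map (algebraMap ℝ ℂ) f) := by
  rw [MvPolynomial.eval_map, MvPolynomial.eval_map]
  have h := MvPolynomial.eval₂_comp_left (starRingEnd ℂ) (algebraMap ℝ ℂ) w f
  rw [h]
  congr 1
  ext r
  simp




lemma coeff_prod_of_natDegree_le' {ι : Type*} (s : Finset ι) (q : ι → Polynomial ℂ) (k : ι → ℕ)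
    (h : ∀ i ∈ s, (q i).natDegree ≤ k i) :
    (∏ i ∈ s, q i).coeff (∑ i ∈ s, k i) = ∏ i ∈ s, (q i).coeff (k i) := by
  classical
  induction s using Finset.cons_induction with
  | empty => simp
  | cons a s ha ih =>
    rw [Finset.prod_cons, Finset.sum_cons, Finset.prod_cons,
      Polynomial.coeff_mul_add_eq_of_natDegree_le (h a (Finset.mem_cons_self a s))
        ((Polynomial.natDegree_prod_le _ _).trans (Finset.sum_le_sum fun i hi =>
          h i (Finset.mem_cons_of_mem hi))),
      ih fun i hi => h i (Finset.mem_cons_of_mem hi)]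

/-- the univariate polynomial obtained from `F` along the line `z ↦ v + z • c` -/
noncomputable def lineP (f : MvPolynomial (Fin n) ℝ) (v c : Fin n → ℂ) : Polynomial ℂ :=
  MvPolynomial.eval₂ Polynomial.C
    (fun i => Polynomial.C (v i) + Polynomial.C (c i) * Polynomial.X)
    (MvPolynomial.map (algebraMap ℝ ℂ) f)

lemma lineP_eval (v c : Fin n → ℂ) (z : ℂ) :
    Polynomial.eval z (lineP f v c)
      = MvPolynomial.eval (fun i => v i + c i * z) (MvPolynomial.map (algebraMap ℝ ℂ) f) := by
  unfold lineP
  have h := MvPolynomial.eval₂_comp_left (Polynomial.evalRingHom z) Polynomial.C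
    (fun i => Polynomial.C (v i) + Polynomial.C (c i) * Polynomial.X)
    (MvPolynomial.map (algebraMap ℝ ℂ) f)
  simp only [Polynomial.coe_evalRingHom] at h
  rw [h]
  have h1 : (Polynomial.evalRingHom z).comp Polynomial.C = RingHom.id ℂ := by
    ext r; simp
  rw [h1]
  have h2 : (Polynomial.eval z ∘ fun i => Polynomial.C (v i) + Polynomial.C (c i) * Polynomial.X)
      = fun i => v i + c i * z := by
    funext i; simp
  rw [h2, MvPolynomial.eval₂_id]

lemma natDegree_lin (a b : ℂ) : (Polynomial.C a + Polynomial.C b * Polynomial.X).natDegree ≤ 1 := by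
  refine (Polynomial.natDegree_add_le _ _).trans ?_
  simp only [Polynomial.natDegree_C, Polynomial.natDegree_C_mul_le]
  refine max_le (by norm_num) ?_
  exact (Polynomial.natDegree_C_mul_le _ _).trans (by simp)

lemma lineP_natDegree_le (hf : f.IsHomogeneous d) (v c : Fin n → ℂ) :
    (lineP f v c).natDegree ≤ d := by
  unfold lineP
  rw [MvPolynomial.eval₂_eq]
  refine Polynomial.natDegree_sum_le_of_forall_le _ _ fun m hm => ?_
  refine (Polynomial.natDegree_mul_le).trans ?_
  have hd : ∑ i ∈ m.support, m i = d :=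
    support_deg hf (MvPolynomial.mem_support_iff.mp hm)
  simp only [Polynomial.natDegree_C, zero_add]
  refine (Polynomial.natDegree_prod_le _ _).trans ?_
  rw [← hd]
  refine Finset.sum_le_sum fun i _ => ?_
  refine Polynomial.natDegree_pow_le.trans ?_
  have := natDegree_lin (v i) (c i)
  nlinarith [this]

lemma lineP_coeff_d (hf : f.IsHomogeneous d) (v c : Fin n → ℂ) :
    (lineP f v c).coeff d
      = MvPolynomial.eval c (MvPolynomial.map (algebraMap ℝ ℂ) f) := by
  unfold lineP
  rw [MvPolynomial.eval₂_eq, MvPolynomial.eval_eq, Polynomial.finset_sum_coeff]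
  apply Finset.sum_congr rfl
  intro m hm
  have hd : ∑ i ∈ m.support, m i = d :=
    support_deg hf (MvPolynomial.mem_support_iff.mp hm)
  rw [Polynomial.coeff_C_mul]
  congr 1
  have hk : ∀ i ∈ m.support,
      ((Polynomial.C (v i) + Polynomial.C (c i) * Polynomial.X) ^ m i).natDegree ≤ m i := by
    intro i _
    refine Polynomial.natDegree_pow_le.trans ?_
    nlinarith [natDegree_lin (v i) (c i)]
  rw [← hd, coeff_prod_of_natDegree_le' _ _ _ hk]
  apply Finset.prod_congr rfl
  intro i _
  have h1 : (Polynomial.C (v i) + Polynomial.C (c i) * Polynomial.X).natDegree ≤ 1 :=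
    natDegree_lin (v i) (c i)
  have := Polynomial.coeff_pow_of_natDegree_le (m := m i) h1
  rw [mul_one] at this
  rw [this]
  congr 1
  simp


lemma eval_pos (hf : f.IsHomogeneous d) (hf0 : f ≠ 0) (hnn : ∀ m, 0 ≤ f.coeff m)
    {b : Fin n → ℝ} (hb : ∀ i, 0 < b i) : 0 < MvPolynomial.eval b f := by
  obtain ⟨m0, hm0⟩ := MvPolynomial.ne_zero_iff.mp hf0
  rw [MvPolynomial.eval_eq]
  apply Finset.sum_pos'
  · intro m hm
    exact mul_nonneg (hnn m) (Finset.prod_nonneg fun i _ => pow_nonneg (hb i).le _)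
  · exact ⟨m0, MvPolynomial.mem_support_iff.mpr hm0,
      mul_pos (lt_of_le_of_ne (hnn m0) (Ne.symm hm0))
        (Finset.prod_pos fun i _ => pow_pos (hb i) _)⟩

lemma eval_continuous : Continuous fun w : Fin n → ℂ =>
    MvPolynomial.eval w (MvPolynomial.map (algebraMap ℝ ℂ) f) := by
  simp only [MvPolynomial.eval_eq]
  exact continuous_finset_sum _ fun m _ => Continuous.mul continuous_const
    (continuous_finset_prod _ fun i _ => (continuous_apply i).pow _)

/-- hypothesis: along direction 1 real-rooted -/
def HypRR {n : ℕ} (f : MvPolynomial (Fin n) ℝ) : Prop :=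
  ∀ y : Fin n → ℝ, ∀ z : ℂ,
    MvPolynomial.eval (fun i => z - (y i : ℂ)) (MvPolynomial.map (algebraMap ℝ ℂ) f) = 0 →
      z.im = 0

lemma hyp_nonvanish (h : HypRR f) (u : Fin n → ℝ) {z : ℂ} (hz : z.im ≠ 0) :
    MvPolynomial.eval (fun i => (u i : ℂ) + z) (MvPolynomial.map (algebraMap ℝ ℂ) f) ≠ 0 := by
  intro h0
  apply hz
  refine h (fun i => - u i) z ?_
  rw [← h0]
  have : (fun i => z - ↑((fun i => -u i) i) : Fin n → ℂ) = fun i => (u i : ℂ) + z := by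
    funext i; push_cast; ring
  rw [this]

lemma norm_multiset_prod_eq (s : Multiset ℂ) : ‖s.prod‖ = (s.map fun x => ‖x‖).prod := by
  induction s using Multiset.induction with
  | empty => simp
  | cons a s ih => simp [norm_mul, ih]

lemma multiset_prod_ge (s : Multiset ℝ) (c : ℝ) (hc : 0 ≤ c) (h : ∀ x ∈ s, c ≤ x) :
    c ^ Multiset.card s ≤ s.prod := by
  induction s using Multiset.induction with
  | empty => simp
  | cons a s ih =>
    simp only [Multiset.card_cons, Multiset.prod_cons, pow_succ, mul_comm]
    have h1 : c ≤ a := h a (Multiset.mem_cons_self a s)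
    have h2 : c ^ Multiset.card s ≤ s.prod := ih fun x hx => h x (Multiset.mem_cons_of_mem hx)
    have h3 : (0:ℝ) ≤ s.prod := le_trans (pow_nonneg hc _) h2
    nlinarith [pow_nonneg hc (Multiset.card s)]

lemma norm_lineP_ge (hf : f.IsHomogeneous d) (v c : Fin n → ℂ)
    (hlead : (lineP f v c).coeff d ≠ 0)
    (hroots : ∀ z : ℂ, 0 ≤ z.im →
      MvPolynomial.eval (fun i => v i + c i * z) (MvPolynomial.map (algebraMap ℝ ℂ) f) ≠ 0)
    {z : ℂ} (hz : 0 ≤ z.im) :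
    ‖(lineP f v c).coeff d‖ * z.im ^ d
      ≤ ‖MvPolynomial.eval (fun i => v i + c i * z) (MvPolynomial.map (algebraMap ℝ ℂ) f)‖ := by
  set P := lineP f v c with hP
  have hdeg : P.natDegree = d :=
    le_antisymm (lineP_natDegree_le hf v c) (Polynomial.le_natDegree_of_ne_zero hlead)
  have hP0 : P ≠ 0 := fun h => hlead (by rw [h]; simp)
  have hsp : P.Splits := IsAlgClosed.splits P
  have hcard : Multiset.card P.roots = d := by
    rw [← hdeg]
    exact (Polynomial.splits_iff_card_roots.mp hsp)
  have heq := (Polynomial.C_leadingCoeff_mul_prod_multiset_X_sub_C (Polynomial.splits_iff_card_roots.mp hsp)).symm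
  have hlc : P.leadingCoeff = P.coeff d := by rw [Polynomial.leadingCoeff, hdeg]
  have hrneg : ∀ r ∈ P.roots, r.im < 0 := by
    intro r hr
    by_contra hge
    push_neg at hge
    exact hroots r hge (by rw [← lineP_eval]; exact Polynomial.isRoot_of_mem_roots hr)
  rw [← lineP_eval, ← hP]
  conv_rhs => rw [heq]
  rw [Polynomial.eval_mul, Polynomial.eval_C, norm_mul, hlc]
  apply mul_le_mul_of_nonneg_left _ (norm_nonneg _)
  rw [Polynomial.eval_multiset_prod]
  rw [Multiset.map_map]
  rw [norm_multiset_prod_eq]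
  have : z.im ^ d ≤ ((P.roots.map fun a => Polynomial.eval z (Polynomial.X - Polynomial.C a)).map
      fun x => ‖x‖).prod := by
    rw [Multiset.map_map]
    have hcd : Multiset.card ((P.roots.map fun a =>
        ‖Polynomial.eval z (Polynomial.X - Polynomial.C a)‖)) = d := by
      rw [Multiset.card_map, hcard]
    rw [← hcd]
    apply multiset_prod_ge _ _ hz
    intro x hx
    obtain ⟨a, ha, rfl⟩ := Multiset.mem_map.mp hx
    have h1 : (P.roots.map (fun r => r)).count a ≥ 0 := by positivity
    have ha' : a.im < 0 := hrneg a ha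
    simp only [Polynomial.eval_sub, Polynomial.eval_X, Polynomial.eval_C]
    calc z.im ≤ (z - a).im := by simp [Complex.sub_im]; linarith
    _ ≤ |(z - a).im| := le_abs_self _
    _ ≤ ‖z - a‖ := Complex.abs_im_le_norm _
  exact this

lemma tendsto_eval {v : ℕ → Fin n → ℂ} {w : Fin n → ℂ}
    (h : ∀ i, Tendsto (fun k => v k i) atTop (𝓝 (w i))) :
    Tendsto (fun k => MvPolynomial.eval (v k) (MvPolynomial.map (algebraMap ℝ ℂ) f)) atTop
      (𝓝 (MvPolynomial.eval w (MvPolynomial.map (algebraMap ℝ ℂ) f))) :=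
  ((eval_continuous (f := f)).tendsto w).comp (tendsto_pi_nhds.mpr h)

lemma exists_subseq {z : ℕ → ℂ} {R : ℝ} (h : ∀ k, ‖z k‖ ≤ R) :
    ∃ a : ℂ, ∃ φ : ℕ → ℕ, StrictMono φ ∧ Tendsto (z ∘ φ) atTop (𝓝 a) := by
  obtain ⟨a, -, φ, hφ, hten⟩ := tendsto_subseq_of_bounded
    (Metric.isBounded_closedBall (x := (0:ℂ)) (r := R))
    (fun k => by simpa [Metric.mem_closedBall, dist_eq_norm] using h k)
  exact ⟨a, φ, hφ, hten⟩

/-- the line vector `x + λ i + z b` -/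
def vvec (x b : Fin n → ℝ) (lam : ℝ) (z : ℂ) : Fin n → ℂ :=
  fun i => ((x i : ℂ) + (lam : ℂ) * Complex.I) + (b i : ℂ) * z

/-- no root of the line polynomial in the closed upper half plane -/
def Good (f : MvPolynomial (Fin n) ℝ) (x b : Fin n → ℝ) (lam : ℝ) : Prop :=
  ∀ z : ℂ, 0 ≤ z.im →
    MvPolynomial.eval (vvec x b lam z) (MvPolynomial.map (algebraMap ℝ ℂ) f) ≠ 0

lemma good_real (hRR : HypRR f) (x b : Fin n → ℝ) {lam : ℝ} (hlam : lam ≠ 0)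
    {z : ℂ} (hz : z.im = 0) :
    MvPolynomial.eval (vvec x b lam z) (MvPolynomial.map (algebraMap ℝ ℂ) f) ≠ 0 := by
  have : vvec x b lam z = fun i => ((x i + b i * z.re : ℝ) : ℂ) + (lam : ℂ) * Complex.I := by
    funext i
    simp only [vvec, Complex.ext_iff, Complex.add_re, Complex.add_im, Complex.mul_re,
      Complex.mul_im, Complex.ofReal_re, Complex.ofReal_im, Complex.I_re, Complex.I_im, hz]
    constructor <;> ring
  rw [this]
  exact hyp_nonvanish hRR _ (by simp [Complex.mul_I_im, hlam])

lemma good_bound (hf : f.IsHomogeneous d) (hf0 : f ≠ 0) (hnn : ∀ m, 0 ≤ f.coeff m)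
    {x b : Fin n → ℝ} (hb : ∀ i, 0 < b i) {lam : ℝ} (hGood : Good f x b lam)
    {z : ℂ} (hz : 0 ≤ z.im) :
    MvPolynomial.eval b f * z.im ^ d
      ≤ ‖MvPolynomial.eval (vvec x b lam z) (MvPolynomial.map (algebraMap ℝ ℂ) f)‖ := by
  have hpb : 0 < MvPolynomial.eval b f := eval_pos hf hf0 hnn hb
  have hco : (lineP f (fun i => (x i : ℂ) + (lam : ℂ) * Complex.I) (fun i => (b i : ℂ))).coeff d
      = ((MvPolynomial.eval b f : ℝ) : ℂ) := by
    rw [lineP_coeff_d hf, eval_real]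
  have h := norm_lineP_ge hf (fun i => (x i : ℂ) + (lam : ℂ) * Complex.I)
    (fun i => (b i : ℂ)) (by rw [hco]; exact_mod_cast hpb.ne') (fun w hw => hGood w hw) hz
  rw [hco] at h
  unfold vvec
  simpa [Complex.norm_real, abs_of_pos hpb] using h

lemma good_limit (hf : f.IsHomogeneous d) (hf0 : f ≠ 0) (hnn : ∀ m, 0 ≤ f.coeff m)
    (hRR : HypRR f) {x b : Fin n → ℝ} (hb : ∀ i, 0 < b i)
    {lam : ℕ → ℝ} {m : ℝ} (hm : 0 < m) (hl : Tendsto lam atTop (𝓝 m))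
    (hg : ∀ k, Good f x b (lam k)) : Good f x b m := by
  intro z hz
  rcases eq_or_lt_of_le hz with hz0 | hzpos
  · exact good_real hRR x b hm.ne' hz0.symm
  · have hpb : 0 < MvPolynomial.eval b f := eval_pos hf hf0 hnn hb
    have hten : Tendsto (fun k =>
        ‖MvPolynomial.eval (vvec x b (lam k) z) (MvPolynomial.map (algebraMap ℝ ℂ) f)‖) atTop
        (𝓝 ‖MvPolynomial.eval (vvec x b m z) (MvPolynomial.map (algebraMap ℝ ℂ) f)‖) := by
      apply Filter.Tendsto.norm
      apply tendsto_eval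
      intro i
      unfold vvec
      have : Tendsto (fun k => ((lam k : ℝ) : ℂ)) atTop (𝓝 ((m : ℝ) : ℂ)) :=
        (Complex.continuous_ofReal.tendsto m).comp hl
      exact (((tendsto_const_nhds.add (this.mul tendsto_const_nhds))).add tendsto_const_nhds)
    have hge : MvPolynomial.eval b f * z.im ^ d
        ≤ ‖MvPolynomial.eval (vvec x b m z) (MvPolynomial.map (algebraMap ℝ ℂ) f)‖ :=
      le_of_tendsto_of_tendsto' tendsto_const_nhds hten
        (fun k => good_bound hf hf0 hnn hb (hg k) hz)
    intro h0
    rw [h0, norm_zero] at hge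
    nlinarith [pow_pos hzpos d]

lemma rescale_zero (hf : f.IsHomogeneous d) {c : ℂ} (hc : c ≠ 0) {w : Fin n → ℂ}
    (h : MvPolynomial.eval (fun i => c * w i) (MvPolynomial.map (algebraMap ℝ ℂ) f) = 0) :
    MvPolynomial.eval w (MvPolynomial.map (algebraMap ℝ ℂ) f) = 0 := by
  rw [eval_smul hf] at h
  exact (mul_eq_zero.mp h).resolve_left (pow_ne_zero _ hc)

lemma eval_dir_ne (hf : f.IsHomogeneous d) (hf0 : f ≠ 0) (hnn : ∀ m, 0 ≤ f.coeff m)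
    {b : Fin n → ℝ} (hb : ∀ i, 0 < b i) {u : ℂ} (hu : u ≠ 0) :
    MvPolynomial.eval (fun i => (b i : ℂ) * u) (MvPolynomial.map (algebraMap ℝ ℂ) f) ≠ 0 := by
  have h1 : (fun i : Fin n => (b i : ℂ) * u) = fun i => u * ((b i : ℂ)) := by
    funext i; ring
  rw [h1, eval_smul hf, eval_real]
  apply mul_ne_zero (pow_ne_zero _ hu)
  exact_mod_cast (eval_pos hf hf0 hnn hb).ne'

/-- bounded real sequences: absolute bound from convergence -/
lemma abs_bound_of_tendsto {lam : ℕ → ℝ} {m : ℝ} (hl : Tendsto lam atTop (𝓝 m)) :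
    ∃ L : ℝ, 0 ≤ L ∧ ∀ k, |lam k| ≤ L := by
  have h1 : BddAbove (Set.range fun k => |lam k|) := (hl.abs).bddAbove_range
  obtain ⟨L, hL⟩ := h1
  exact ⟨max L 0, le_max_right _ _, fun k =>
    le_trans (hL (Set.mem_range_self k)) (le_max_left _ _)⟩

lemma bad_limit (hf : f.IsHomogeneous d) (hf0 : f ≠ 0) (hnn : ∀ m, 0 ≤ f.coeff m)
    {x b : Fin n → ℝ} (hb : ∀ i, 0 < b i) {lam : ℕ → ℝ} {m : ℝ}
    (hl : Tendsto lam atTop (𝓝 m)) {z : ℕ → ℂ} (hz : ∀ k, 0 ≤ (z k).im)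
    (h0 : ∀ k, MvPolynomial.eval (vvec x b (lam k) (z k))
      (MvPolynomial.map (algebraMap ℝ ℂ) f) = 0) :
    ∃ ζ : ℂ, 0 ≤ ζ.im ∧
      MvPolynomial.eval (vvec x b m ζ) (MvPolynomial.map (algebraMap ℝ ℂ) f) = 0 := by
  by_cases hbd : ∃ R, ∀ k, ‖z k‖ ≤ R
  · obtain ⟨R, hR⟩ := hbd
    obtain ⟨a, φ, hφ, hta⟩ := exists_subseq hR
    have hlam' : Tendsto (lam ∘ φ) atTop (𝓝 m) := hl.comp hφ.tendsto_atTop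
    refine ⟨a, ?_, ?_⟩
    · have him : Tendsto (fun k => (z (φ k)).im) atTop (𝓝 a.im) :=
        (Complex.continuous_im.tendsto a).comp hta
      exact ge_of_tendsto him (Filter.Eventually.of_forall fun k => hz (φ k))
    · have hteval : Tendsto (fun k => MvPolynomial.eval (vvec x b (lam (φ k)) (z (φ k)))
          (MvPolynomial.map (algebraMap ℝ ℂ) f)) atTop
          (𝓝 (MvPolynomial.eval (vvec x b m a) (MvPolynomial.map (algebraMap ℝ ℂ) f))) := by
        apply tendsto_eval
        intro i
        unfold vvec
        have h1 : Tendsto (fun k => ((lam (φ k) : ℝ) : ℂ)) atTop (𝓝 ((m : ℝ) : ℂ)) :=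
          (Complex.continuous_ofReal.tendsto m).comp hlam'
        exact (tendsto_const_nhds.add (h1.mul tendsto_const_nhds)).add
          (tendsto_const_nhds.mul hta)
      have : Tendsto (fun _ : ℕ => (0 : ℂ)) atTop
          (𝓝 (MvPolynomial.eval (vvec x b m a) (MvPolynomial.map (algebraMap ℝ ℂ) f))) := by
        simpa [fun k => h0 (φ k)] using hteval
      exact (tendsto_nhds_unique tendsto_const_nhds this).symm
  · exfalso
    push_neg at hbd
    have hsel : ∀ k : ℕ, ∃ j, ((k : ℝ) + 1) < ‖z j‖ := fun k => hbd ((k : ℝ) + 1)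
    choose ψ hψ using hsel
    set r : ℕ → ℝ := fun k => ‖z (ψ k)‖ with hrdef
    have hrpos : ∀ k, 0 < r k := fun k => lt_of_le_of_lt (by positivity) (hψ k)
    have hrge : ∀ k : ℕ, (k : ℝ) + 1 ≤ r k := fun k => (hψ k).le
    set u : ℕ → ℂ := fun k => z (ψ k) / (r k : ℂ) with hudef
    have hunorm : ∀ k, ‖u k‖ = 1 := by
      intro k
      rw [hudef]
      simp only [norm_div, Complex.norm_real, Real.norm_eq_abs]
      rw [abs_of_pos (hrpos k)]
      exact div_self (hrpos k).ne'
    -- rescaled zero equation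
    have hres : ∀ k, MvPolynomial.eval
        (fun i => ((x i : ℂ) + (lam (ψ k) : ℂ) * Complex.I) / (r k : ℂ) + (b i : ℂ) * u k)
        (MvPolynomial.map (algebraMap ℝ ℂ) f) = 0 := by
      intro k
      have hr0 : ((r k : ℝ) : ℂ) ≠ 0 := by exact_mod_cast (hrpos k).ne'
      apply rescale_zero hf (c := ((r k : ℝ) : ℂ)) hr0
      have hveq : (fun i => ((r k : ℝ) : ℂ) *
          (((x i : ℂ) + (lam (ψ k) : ℂ) * Complex.I) / ((r k : ℝ) : ℂ) + (b i : ℂ) * u k))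
          = vvec x b (lam (ψ k)) (z (ψ k)) := by
        funext i
        simp only [vvec, hudef]
        field_simp
      rw [hveq]
      exact h0 (ψ k)
    obtain ⟨L, hL0, hL⟩ := abs_bound_of_tendsto hl
    obtain ⟨a, φ, hφ, hta⟩ := exists_subseq (z := u) (R := 1) (fun k => (hunorm k).le)
    have hanorm : ‖a‖ = 1 := by
      have h1 : Tendsto (fun k => ‖u (φ k)‖) atTop (𝓝 ‖a‖) :=
        (continuous_norm.tendsto a).comp hta
      have h2 : (fun k => ‖u (φ k)‖) = fun _ => (1:ℝ) := funext fun k => hunorm (φ k)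
      rw [h2] at h1
      exact (tendsto_nhds_unique tendsto_const_nhds h1).symm
    have ha0 : a ≠ 0 := by
      intro h
      rw [h, norm_zero] at hanorm
      norm_num at hanorm
    -- limit of the rescaled sequence
    have hdiv : ∀ C : ℝ, Tendsto (fun k : ℕ => C / ((k:ℝ)+1)) atTop (𝓝 0) := by
      intro C
      have h1 := (tendsto_const_div_atTop_nhds_zero_nat C).comp (tendsto_add_atTop_nat 1)
      have h2 : ((fun n : ℕ => C / (n:ℝ)) ∘ fun n => n + 1) = fun k : ℕ => C / ((k:ℝ)+1) := by
        funext k; simp [Function.comp]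
      rwa [h2] at h1
    have hterm1 : ∀ i : Fin n, Tendsto
        (fun k => ((x i : ℂ) + (lam (ψ (φ k)) : ℂ) * Complex.I) / ((r (φ k) : ℝ) : ℂ))
        atTop (𝓝 0) := by
      intro i
      apply squeeze_zero_norm (a := fun k : ℕ => (|x i| + L) / ((k:ℝ)+1)) _ (hdiv _)
      intro k
      have hnum : ‖(x i : ℂ) + (lam (ψ (φ k)) : ℂ) * Complex.I‖ ≤ |x i| + L := by
        refine (norm_add_le _ _).trans ?_
        have e1 : ‖((x i : ℝ) : ℂ)‖ = |x i| := by
          simp [Complex.norm_real]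
        have e2 : ‖((lam (ψ (φ k)) : ℝ) : ℂ) * Complex.I‖ = |lam (ψ (φ k))| := by
          simp [norm_mul, Complex.norm_real]
        rw [e1, e2]
        linarith [hL (ψ (φ k))]
      rw [norm_div]
      have hrk : ((k:ℝ)+1) ≤ r (φ k) :=
        le_trans (by exact_mod_cast Nat.succ_le_succ (hφ.le_apply)) (hrge (φ k))
      have hrk0 : (0:ℝ) < (k:ℝ)+1 := by positivity
      have : ‖((r (φ k) : ℝ) : ℂ)‖ = r (φ k) := by
        simp [Complex.norm_real, abs_of_pos (hrpos (φ k))]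
      rw [this]
      exact div_le_div₀ (by positivity) hnum (by positivity) hrk
    have hteval : Tendsto (fun k => MvPolynomial.eval
        (fun i => ((x i : ℂ) + (lam (ψ (φ k)) : ℂ) * Complex.I) / ((r (φ k) : ℝ) : ℂ)
          + (b i : ℂ) * u (φ k))
        (MvPolynomial.map (algebraMap ℝ ℂ) f)) atTop
        (𝓝 (MvPolynomial.eval (fun i => 0 + (b i : ℂ) * a)
          (MvPolynomial.map (algebraMap ℝ ℂ) f))) := by
      apply tendsto_eval
      intro i
      exact (hterm1 i).add (tendsto_const_nhds.mul hta)
    have hzero : MvPolynomial.eval (fun i => 0 + (b i : ℂ) * a)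
        (MvPolynomial.map (algebraMap ℝ ℂ) f) = 0 := by
      have : (fun k => MvPolynomial.eval
          (fun i => ((x i : ℂ) + (lam (ψ (φ k)) : ℂ) * Complex.I) / ((r (φ k) : ℝ) : ℂ)
            + (b i : ℂ) * u (φ k))
          (MvPolynomial.map (algebraMap ℝ ℂ) f)) = fun _ => (0:ℂ) :=
        funext fun k => (hres (φ k) :)
      rw [this] at hteval
      exact (tendsto_nhds_unique tendsto_const_nhds hteval).symm
    have : (fun i : Fin n => (0:ℂ) + (b i : ℂ) * a) = fun i => (b i : ℂ) * a := by
      funext i; ring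
    rw [this] at hzero
    exact eval_dir_ne hf hf0 hnn hb ha0 hzero

lemma eventually_good (hf : f.IsHomogeneous d) (hf0 : f ≠ 0) (hnn : ∀ m, 0 ≤ f.coeff m)
    (hRR : HypRR f) {x b : Fin n → ℝ} (hb : ∀ i, 0 < b i) :
    ∃ K : ℝ, 0 < K ∧ ∀ lam : ℝ, K ≤ lam → Good f x b lam := by
  by_contra hcon
  push_neg at hcon
  have hsel : ∀ k : ℕ, ∃ lam : ℝ, ((k:ℝ)+1) ≤ lam ∧ ¬ Good f x b lam := by
    intro k
    obtain ⟨lam, h1, h2⟩ := hcon ((k:ℝ)+1) (by positivity)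
    exact ⟨lam, h1, h2⟩
  choose lam hlamge hbadg using hsel
  have hlampos : ∀ k, 0 < lam k := fun k => lt_of_lt_of_le (by positivity) (hlamge k)
  have hbadz : ∀ k, ∃ z : ℂ, 0 ≤ z.im ∧
      MvPolynomial.eval (vvec x b (lam k) z) (MvPolynomial.map (algebraMap ℝ ℂ) f) = 0 := by
    intro k
    have := hbadg k
    unfold Good at this
    push_neg at this
    obtain ⟨z, h1, h2⟩ := this
    exact ⟨z, h1, h2⟩
  choose z hzim hz0 using hbadz
  set ζ : ℕ → ℂ := fun k => z k / ((lam k : ℝ) : ℂ) with hζdef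
  have hlamC : ∀ k, ((lam k : ℝ) : ℂ) ≠ 0 := fun k => by exact_mod_cast (hlampos k).ne'
  have hζim : ∀ k, 0 ≤ (ζ k).im := by
    intro k
    have h1 : 0 ≤ (z k).im * lam k := mul_nonneg (hzim k) (hlampos k).le
    rw [hζdef]
    simp only [Complex.div_im, Complex.ofReal_re, Complex.ofReal_im, mul_zero, sub_zero,
      Complex.normSq_ofReal, zero_div]
    apply div_nonneg h1
    nlinarith [hlampos k]
  have hres : ∀ k, MvPolynomial.eval
      (fun i => (x i : ℂ) / ((lam k : ℝ) : ℂ) + Complex.I + (b i : ℂ) * ζ k)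
      (MvPolynomial.map (algebraMap ℝ ℂ) f) = 0 := by
    intro k
    apply rescale_zero hf (hlamC k)
    have hveq : (fun i => ((lam k : ℝ) : ℂ) *
        ((x i : ℂ) / ((lam k : ℝ) : ℂ) + Complex.I + (b i : ℂ) * ζ k))
        = vvec x b (lam k) (z k) := by
      funext i
      simp only [vvec, hζdef]
      field_simp [hlamC k]
    rw [hveq]
    exact hz0 k
  by_cases hbd : ∃ R, ∀ k, ‖ζ k‖ ≤ R
  · -- bounded case : limit gives root of f(i·1 + c0·b)
    obtain ⟨R, hR⟩ := hbd
    obtain ⟨c0, φ, hφ, hta⟩ := exists_subseq hR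
    have hc0im : 0 ≤ c0.im := by
      have him : Tendsto (fun k => (ζ (φ k)).im) atTop (𝓝 c0.im) :=
        (Complex.continuous_im.tendsto c0).comp hta
      exact ge_of_tendsto him (Filter.Eventually.of_forall fun k => hζim (φ k))
    have hdiv : ∀ C : ℝ, Tendsto (fun k : ℕ => C / ((k:ℝ)+1)) atTop (𝓝 0) := by
      intro C
      have h1 := (tendsto_const_div_atTop_nhds_zero_nat C).comp (tendsto_add_atTop_nat 1)
      have h2 : ((fun n : ℕ => C / (n:ℝ)) ∘ fun n => n + 1) = fun k : ℕ => C / ((k:ℝ)+1) := by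
        funext k; simp [Function.comp]
      rwa [h2] at h1
    have hterm1 : ∀ i : Fin n, Tendsto
        (fun k => (x i : ℂ) / ((lam (φ k) : ℝ) : ℂ)) atTop (𝓝 0) := by
      intro i
      apply squeeze_zero_norm (a := fun k : ℕ => |x i| / ((k:ℝ)+1)) _ (hdiv _)
      intro k
      rw [norm_div]
      have e1 : ‖((x i : ℝ) : ℂ)‖ = |x i| := by simp [Complex.norm_real]
      have e2 : ‖((lam (φ k) : ℝ) : ℂ)‖ = lam (φ k) := by
        simp [Complex.norm_real, Real.norm_eq_abs, abs_of_pos (hlampos (φ k))]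
      rw [e1, e2]
      have hk : ((k:ℝ)+1) ≤ lam (φ k) :=
        le_trans (by exact_mod_cast Nat.succ_le_succ hφ.le_apply) (hlamge (φ k))
      exact div_le_div_of_nonneg_left (abs_nonneg _) (by positivity) hk
        |>.trans_eq rfl |>.trans (le_refl _)
    have hteval : Tendsto (fun k => MvPolynomial.eval
        (fun i => (x i : ℂ) / ((lam (φ k) : ℝ) : ℂ) + Complex.I + (b i : ℂ) * ζ (φ k))
        (MvPolynomial.map (algebraMap ℝ ℂ) f)) atTop
        (𝓝 (MvPolynomial.eval (fun i => 0 + Complex.I + (b i : ℂ) * c0)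
          (MvPolynomial.map (algebraMap ℝ ℂ) f))) := by
      apply tendsto_eval
      intro i
      exact ((hterm1 i).add tendsto_const_nhds).add (tendsto_const_nhds.mul hta)
    have hzero : MvPolynomial.eval (fun i => 0 + Complex.I + (b i : ℂ) * c0)
        (MvPolynomial.map (algebraMap ℝ ℂ) f) = 0 := by
      have heq : (fun k => MvPolynomial.eval
          (fun i => (x i : ℂ) / ((lam (φ k) : ℝ) : ℂ) + Complex.I + (b i : ℂ) * ζ (φ k))
          (MvPolynomial.map (algebraMap ℝ ℂ) f)) = fun _ => (0:ℂ) :=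
        funext fun k => (hres (φ k) :)
      rw [heq] at hteval
      exact (tendsto_nhds_unique tendsto_const_nhds hteval).symm
    -- now analyze the root  I + c0 * b
    by_cases hc0 : c0 = 0
    · rw [hc0] at hzero
      have : (fun i : Fin n => (0:ℂ) + Complex.I + (b i : ℂ) * 0)
          = fun i : Fin n => Complex.I * ((1:ℝ) : ℂ) := by
        funext i; simp
      rw [this] at hzero
      have h1 : (fun i : Fin n => Complex.I * ((1:ℝ) : ℂ))
          = fun i : Fin n => Complex.I * ((fun _ : Fin n => ((1:ℝ):ℂ)) i) := rfl
      rw [h1, eval_smul hf] at hzero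
      have h2 : (fun _ : Fin n => ((1:ℝ) : ℂ)) = fun i : Fin n => (((fun _ => 1 : Fin n → ℝ)) i : ℂ) := rfl
      rw [h2, eval_real] at hzero
      have h3 : 0 < MvPolynomial.eval (fun _ => (1:ℝ)) f :=
        eval_pos hf hf0 hnn (fun _ => one_pos)
      rcases mul_eq_zero.mp hzero with h | h
      · exact (pow_ne_zero _ Complex.I_ne_zero) h
      · exact h3.ne' (by exact_mod_cast h)
    · -- c0 ≠ 0 : rescale to  b + (I/c0)·1 and use HypRR
      have hzero2 : MvPolynomial.eval (fun i => (b i : ℂ) + Complex.I / c0)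
          (MvPolynomial.map (algebraMap ℝ ℂ) f) = 0 := by
        apply rescale_zero hf hc0
        have hveq : (fun i => c0 * ((b i : ℂ) + Complex.I / c0))
            = fun i : Fin n => (0:ℂ) + Complex.I + (b i : ℂ) * c0 := by
          funext i
          field_simp [hc0]
          ring
        rw [hveq]
        exact hzero
      set w : ℂ := Complex.I / c0 with hwdef
      have hwim : w.im = 0 := by
        apply hRR (fun i => - b i) w
        have hveq : (fun i : Fin n => w - ((-(b i) : ℝ) : ℂ)) = fun i => (b i : ℂ) + Complex.I / c0 := by
          funext i
          rw [hwdef]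
          push_cast
          ring
        rw [hveq]
        exact hzero2
      have hre0 : c0.re = 0 := by
        have : w.im = c0.re / Complex.normSq c0 := by
          rw [hwdef]
          simp [Complex.div_im]
        rw [this] at hwim
        have hn : Complex.normSq c0 ≠ 0 := (Complex.normSq_pos.mpr hc0).ne' 
        field_simp at hwim
        simpa using hwim
      have hc0impos : 0 < c0.im := by
        rcases lt_or_eq_of_le hc0im with h | h
        · exact h
        · exfalso; apply hc0; apply Complex.ext <;> simp [hre0, ← h]
      have hwre : 0 < w.re := by
        have : w.re = c0.im / Complex.normSq c0 := by
          rw [hwdef]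
          simp [Complex.div_re]
        rw [this]
        have hn : 0 < Complex.normSq c0 := Complex.normSq_pos.mpr hc0
        positivity
      have hwreal : w = ((w.re : ℝ) : ℂ) := by
        apply Complex.ext <;> simp [hwim]
      have : (fun i => (b i : ℂ) + w) = fun i => (((fun j => b j + w.re) : Fin n → ℝ) i : ℂ) := by
        funext i
        apply Complex.ext <;>
          simp [Complex.add_re, Complex.add_im, Complex.ofReal_re, Complex.ofReal_im, hwim]
      rw [this, eval_real] at hzero2
      have h3 : 0 < MvPolynomial.eval (fun j => b j + w.re) f :=
        eval_pos hf hf0 hnn (fun j => by have := hb j; linarith)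
      exact h3.ne' (by exact_mod_cast hzero2)
  · -- unbounded case: impossible as before
    push_neg at hbd
    have hsel2 : ∀ k : ℕ, ∃ j, ((k : ℝ) + 1) < ‖ζ j‖ := fun k => hbd ((k : ℝ) + 1)
    choose ψ hψ using hsel2
    set r : ℕ → ℝ := fun k => ‖ζ (ψ k)‖ with hrdef
    have hrpos : ∀ k, 0 < r k := fun k => lt_of_le_of_lt (by positivity) (hψ k)
    have hrge : ∀ k : ℕ, (k : ℝ) + 1 ≤ r k := fun k => (hψ k).le
    set u : ℕ → ℂ := fun k => ζ (ψ k) / ((r k : ℝ) : ℂ) with hudef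
    have hrC : ∀ k, ((r k : ℝ) : ℂ) ≠ 0 := fun k => by exact_mod_cast (hrpos k).ne'
    have hunorm : ∀ k, ‖u k‖ = 1 := by
      intro k
      rw [hudef]
      simp only [norm_div, Complex.norm_real, Real.norm_eq_abs]
      rw [abs_of_pos (hrpos k)]
      exact div_self (hrpos k).ne'
    have hres2 : ∀ k, MvPolynomial.eval
        (fun i => (x i : ℂ) / (((lam (ψ k) : ℝ) : ℂ) * ((r k : ℝ) : ℂ))
          + Complex.I / ((r k : ℝ) : ℂ) + (b i : ℂ) * u k)
        (MvPolynomial.map (algebraMap ℝ ℂ) f) = 0 := by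
      intro k
      apply rescale_zero hf (hrC k)
      have hveq : (fun i => ((r k : ℝ) : ℂ) *
          ((x i : ℂ) / (((lam (ψ k) : ℝ) : ℂ) * ((r k : ℝ) : ℂ))
            + Complex.I / ((r k : ℝ) : ℂ) + (b i : ℂ) * u k))
          = fun i => (x i : ℂ) / ((lam (ψ k) : ℝ) : ℂ) + Complex.I + (b i : ℂ) * ζ (ψ k) := by
        funext i
        simp only [hudef]
        field_simp [hrC k, hlamC (ψ k)]
      rw [hveq]
      exact hres (ψ k)
    obtain ⟨a, φ, hφ, hta⟩ := exists_subseq (z := u) (R := 1) (fun k => (hunorm k).le)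
    have hanorm : ‖a‖ = 1 := by
      have h1 : Tendsto (fun k => ‖u (φ k)‖) atTop (𝓝 ‖a‖) :=
        (continuous_norm.tendsto a).comp hta
      have h2 : (fun k => ‖u (φ k)‖) = fun _ => (1:ℝ) := funext fun k => hunorm (φ k)
      rw [h2] at h1
      exact (tendsto_nhds_unique tendsto_const_nhds h1).symm
    have ha0 : a ≠ 0 := by
      intro h; rw [h, norm_zero] at hanorm; norm_num at hanorm
    have hdiv : ∀ C : ℝ, Tendsto (fun k : ℕ => C / ((k:ℝ)+1)) atTop (𝓝 0) := by
      intro C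
      have h1 := (tendsto_const_div_atTop_nhds_zero_nat C).comp (tendsto_add_atTop_nat 1)
      have h2 : ((fun n : ℕ => C / (n:ℝ)) ∘ fun n => n + 1) = fun k : ℕ => C / ((k:ℝ)+1) := by
        funext k; simp [Function.comp]
      rwa [h2] at h1
    have hterm1 : ∀ i : Fin n, Tendsto
        (fun k => (x i : ℂ) / (((lam (ψ (φ k)) : ℝ) : ℂ) * ((r (φ k) : ℝ) : ℂ)))
        atTop (𝓝 0) := by
      intro i
      apply squeeze_zero_norm (a := fun k : ℕ => |x i| / ((k:ℝ)+1)) _ (hdiv _)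
      intro k
      rw [norm_div, norm_mul]
      have e1 : ‖((x i : ℝ) : ℂ)‖ = |x i| := by simp [Complex.norm_real]
      have e2 : ‖((lam (ψ (φ k)) : ℝ) : ℂ)‖ = lam (ψ (φ k)) := by
        simp [Complex.norm_real, Real.norm_eq_abs, abs_of_pos (hlampos (ψ (φ k)))]
      have e3 : ‖((r (φ k) : ℝ) : ℂ)‖ = r (φ k) := by
        simp [Complex.norm_real, Real.norm_eq_abs, abs_of_pos (hrpos (φ k))]
      rw [e1, e2, e3]
      have h1 : (1:ℝ) ≤ lam (ψ (φ k)) := le_trans (by norm_num : (1:ℝ) ≤ (ψ (φ k) : ℝ)+1) (hlamge _)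
      have h2 : ((k:ℝ)+1) ≤ r (φ k) :=
        le_trans (by exact_mod_cast Nat.succ_le_succ hφ.le_apply) (hrge (φ k))
      have h3 : ((k:ℝ)+1) ≤ lam (ψ (φ k)) * r (φ k) := by nlinarith [hrpos (φ k)]
      exact div_le_div_of_nonneg_left (abs_nonneg _) (by positivity) h3
        |>.trans (le_refl _)
    have hterm2 : Tendsto (fun k => Complex.I / ((r (φ k) : ℝ) : ℂ)) atTop (𝓝 0) := by
      apply squeeze_zero_norm (a := fun k : ℕ => 1 / ((k:ℝ)+1)) _ (hdiv _)
      intro k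
      rw [norm_div]
      have e3 : ‖((r (φ k) : ℝ) : ℂ)‖ = r (φ k) := by
        simp [Complex.norm_real, Real.norm_eq_abs, abs_of_pos (hrpos (φ k))]
      rw [e3, Complex.norm_I]
      have h2 : ((k:ℝ)+1) ≤ r (φ k) :=
        le_trans (by exact_mod_cast Nat.succ_le_succ hφ.le_apply) (hrge (φ k))
      exact div_le_div_of_nonneg_left one_pos.le (by positivity) h2 |>.trans (le_refl _)
    have hteval : Tendsto (fun k => MvPolynomial.eval
        (fun i => (x i : ℂ) / (((lam (ψ (φ k)) : ℝ) : ℂ) * ((r (φ k) : ℝ) : ℂ))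
          + Complex.I / ((r (φ k) : ℝ) : ℂ) + (b i : ℂ) * u (φ k))
        (MvPolynomial.map (algebraMap ℝ ℂ) f)) atTop
        (𝓝 (MvPolynomial.eval (fun i => 0 + 0 + (b i : ℂ) * a)
          (MvPolynomial.map (algebraMap ℝ ℂ) f))) := by
      apply tendsto_eval
      intro i
      exact ((hterm1 i).add hterm2).add (tendsto_const_nhds.mul hta)
    have hzero : MvPolynomial.eval (fun i => 0 + 0 + (b i : ℂ) * a)
        (MvPolynomial.map (algebraMap ℝ ℂ) f) = 0 := by
      have heq : (fun k => MvPolynomial.eval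
          (fun i => (x i : ℂ) / (((lam (ψ (φ k)) : ℝ) : ℂ) * ((r (φ k) : ℝ) : ℂ))
            + Complex.I / ((r (φ k) : ℝ) : ℂ) + (b i : ℂ) * u (φ k))
          (MvPolynomial.map (algebraMap ℝ ℂ) f)) = fun _ => (0:ℂ) :=
        funext fun k => (hres2 (φ k) :)
      rw [heq] at hteval
      exact (tendsto_nhds_unique tendsto_const_nhds hteval).symm
    have : (fun i : Fin n => (0:ℂ) + 0 + (b i : ℂ) * a) = fun i => (b i : ℂ) * a := by
      funext i; ring
    rw [this] at hzero
    exact eval_dir_ne hf hf0 hnn hb ha0 hzero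

lemma tendsto_div_add_two (C : ℝ) : Tendsto (fun k : ℕ => C / ((k:ℝ)+2)) atTop (𝓝 0) := by
  have h1 := (tendsto_const_div_atTop_nhds_zero_nat C).comp (tendsto_add_atTop_nat 2)
  have h2 : ((fun n : ℕ => C / (n:ℝ)) ∘ fun n => n + 2) = fun k : ℕ => C / ((k:ℝ)+2) := by
    funext k; simp [Function.comp]
  rwa [h2] at h1

lemma all_good (hf : f.IsHomogeneous d) (hf0 : f ≠ 0) (hnn : ∀ m, 0 ≤ f.coeff m)
    (hRR : HypRR f) {x b : Fin n → ℝ} (hb : ∀ i, 0 < b i) :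
    ∀ lam : ℝ, 0 < lam → Good f x b lam := by
  by_contra hcon
  push_neg at hcon
  obtain ⟨l0, hl0pos, hl0bad⟩ := hcon
  obtain ⟨K, hKpos, hK⟩ := eventually_good hf hf0 hnn hRR hb
  set T : Set ℝ := {μ : ℝ | l0 ≤ μ ∧ Good f x b μ} with hTdef
  have hTne : T.Nonempty := ⟨max K (l0+1),
    le_trans (by linarith) (le_max_right _ _), hK _ (le_max_left _ _)⟩
  have hTbdd : BddBelow T := ⟨l0, fun μ hμ => hμ.1⟩
  have hTclosed : IsClosed T := by
    apply IsSeqClosed.isClosed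
    intro s p hs hsp
    have hp : l0 ≤ p := ge_of_tendsto hsp (Filter.Eventually.of_forall fun k => (hs k).1)
    exact ⟨hp, good_limit hf hf0 hnn hRR hb (by linarith) hsp (fun k => (hs k).2)⟩
  have hmT : sInf T ∈ T := hTclosed.csInf_mem hTne hTbdd
  set m := sInf T with hmdef
  have hmgt : l0 < m := by
    rcases lt_or_eq_of_le hmT.1 with h | h
    · exact h
    · exact absurd (h ▸ hmT.2) hl0bad
  set μ : ℕ → ℝ := fun k => m - (m - l0)/((k:ℝ)+2) with hμdef
  have hμlt : ∀ k, μ k < m := fun k =>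
    sub_lt_self _ (div_pos (by linarith) (by positivity))
  have hμge : ∀ k, l0 ≤ μ k := by
    intro k
    have h1 : (m - l0)/((k:ℝ)+2) ≤ m - l0 := by
      apply div_le_self (by linarith)
      have := Nat.cast_nonneg (α := ℝ) k
      linarith
    simp only [hμdef]
    linarith
  have hμbad : ∀ k, ¬ Good f x b (μ k) := by
    intro k hg
    exact absurd (csInf_le hTbdd ⟨hμge k, hg⟩) (not_le.mpr (hμlt k))
  have hμtend : Tendsto μ atTop (𝓝 m) := by
    have := (tendsto_const_nhds : Tendsto (fun _ : ℕ => m) atTop (𝓝 m)).sub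
      (tendsto_div_add_two (m - l0))
    simpa using this
  have hbadz : ∀ k, ∃ zz : ℂ, 0 ≤ zz.im ∧
      MvPolynomial.eval (vvec x b (μ k) zz) (MvPolynomial.map (algebraMap ℝ ℂ) f) = 0 := by
    intro k
    have := hμbad k
    unfold Good at this
    push_neg at this
    obtain ⟨zz, h1, h2⟩ := this
    exact ⟨zz, h1, h2⟩
  choose zz hzzim hzz0 using hbadz
  obtain ⟨ζ, hζim, hζ0⟩ := bad_limit hf hf0 hnn hb hμtend hzzim hzz0
  exact hmT.2 ζ hζim hζ0

lemma stable_of_hypRR (hf : f.IsHomogeneous d) (hf0 : f ≠ 0) (hnn : ∀ m, 0 ≤ f.coeff m)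
    (hRR : HypRR f) : ∀ w : Fin n → ℂ, (∀ j, 0 < (w j).im) →
      MvPolynomial.eval w (MvPolynomial.map (algebraMap ℝ ℂ) f) ≠ 0 := by
  intro w hw
  set x : Fin n → ℝ := fun i => (w i).re with hxdef
  set b : Fin n → ℝ := fun i => (w i).im with hbdef
  have hb : ∀ i, 0 < b i := hw
  have hpb : 0 < MvPolynomial.eval b f := eval_pos hf hf0 hnn hb
  set lamseq : ℕ → ℝ := fun k => 1/((k:ℝ)+1) with hlamdef
  have hlampos : ∀ k, 0 < lamseq k := fun k => by positivity
  have hgood : ∀ k, Good f x b (lamseq k) :=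
    fun k => all_good hf hf0 hnn hRR hb _ (hlampos k)
  have hbound : ∀ k, MvPolynomial.eval b f
      ≤ ‖MvPolynomial.eval (vvec x b (lamseq k) Complex.I)
          (MvPolynomial.map (algebraMap ℝ ℂ) f)‖ := by
    intro k
    have := good_bound hf hf0 hnn hb (hgood k) (z := Complex.I) (by simp)
    simpa using this
  have hlamtend : Tendsto lamseq atTop (𝓝 0) := by
    have h1 := (tendsto_const_div_atTop_nhds_zero_nat (1:ℝ)).comp (tendsto_add_atTop_nat 1)
    have h2 : ((fun n : ℕ => 1 / (n:ℝ)) ∘ fun n => n + 1) = lamseq := by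
      funext k; simp [hlamdef, Function.comp]
    rwa [h2] at h1
  have hteval : Tendsto (fun k => MvPolynomial.eval (vvec x b (lamseq k) Complex.I)
      (MvPolynomial.map (algebraMap ℝ ℂ) f)) atTop
      (𝓝 (MvPolynomial.eval w (MvPolynomial.map (algebraMap ℝ ℂ) f))) := by
    apply tendsto_eval
    intro i
    unfold vvec
    have h1 : Tendsto (fun k => ((lamseq k : ℝ) : ℂ)) atTop (𝓝 ((0:ℝ) : ℂ)) :=
      (Complex.continuous_ofReal.tendsto 0).comp hlamtend
    have h2 : Tendsto (fun k => ((x i : ℝ) : ℂ) + ((lamseq k : ℝ) : ℂ) * Complex.I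
          + ((b i : ℝ) : ℂ) * Complex.I) atTop
        (𝓝 (((x i : ℝ) : ℂ) + ((0:ℝ) : ℂ) * Complex.I + ((b i : ℝ) : ℂ) * Complex.I)) :=
      (tendsto_const_nhds.add (h1.mul tendsto_const_nhds)).add tendsto_const_nhds
    have h3 : ((x i : ℝ) : ℂ) + ((0:ℝ) : ℂ) * Complex.I + ((b i : ℝ) : ℂ) * Complex.I = w i := by
      apply Complex.ext <;> simp [hxdef, hbdef]
    rwa [h3] at h2
  have hnorm : MvPolynomial.eval b f
      ≤ ‖MvPolynomial.eval w (MvPolynomial.map (algebraMap ℝ ℂ) f)‖ :=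
    le_of_tendsto_of_tendsto' tendsto_const_nhds hteval.norm hbound
  intro h0
  rw [h0, norm_zero] at hnorm
  linarith

end RSAux

/-- A nonzero homogeneous polynomial `f` of degree `d` in `n` variables with nonnegative
coefficients is real stable iff for every `y ∈ ℝⁿ` the univariate polynomial
`t ↦ f(t·1 - y)` has only real zeros; by homogeneity this is further equivalent to
requiring it only for `y` on the sphere `{ y : ∑ yᵢ = 0, ∑ yᵢ² = 1 }`. -/
theorem real_stable_iff_real_rooted_restrictions (n d : ℕ) (f : MvPolynomial (Fin n) ℝ)
    (hf : f.IsHomogeneous d) (hf0 : f ≠ 0) (hnn : ∀ m, 0 ≤ f.coeff m) :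
    ((∀ w : Fin n → ℂ, (∀ j, 0 < (w j).im) →
        MvPolynomial.eval w (MvPolynomial.map (algebraMap ℝ ℂ) f) ≠ 0)
      ↔ (∀ y : Fin n → ℝ, ∀ z : ℂ,
          MvPolynomial.eval (fun i => z - (y i : ℂ)) (MvPolynomial.map (algebraMap ℝ ℂ) f) = 0 →
            z.im = 0)) ∧
    ((∀ y : Fin n → ℝ, ∀ z : ℂ,
        MvPolynomial.eval (fun i => z - (y i : ℂ)) (MvPolynomial.map (algebraMap ℝ ℂ) f) = 0 →
          z.im = 0)
      ↔ (∀ y : Fin n → ℝ, (∑ i, y i) = 0 → (∑ i, (y i) ^ 2) = 1 → ∀ z : ℂ,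
          MvPolynomial.eval (fun i => z - (y i : ℂ)) (MvPolynomial.map (algebraMap ℝ ℂ) f) = 0 →
            z.im = 0)) := by
  constructor
  · constructor
    · -- stability → real rooted
      intro hstab y z h0
      by_contra him
      rcases lt_or_gt_of_ne him with hneg | hpos
      · have h1 := RSAux.eval_conj (f := f) (fun i => z - (y i : ℂ))
        rw [h0, map_zero] at h1
        have h2 : (fun i => (starRingEnd ℂ) (z - (y i : ℂ)))
            = fun i => (starRingEnd ℂ) z - (y i : ℂ) := by
          funext i
          simp [map_sub, Complex.conj_ofReal]
        rw [h2] at h1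
        refine hstab _ (fun j => ?_) h1.symm
        simp [Complex.sub_im, Complex.conj_im]
        linarith
      · refine hstab _ (fun j => ?_) h0
        simp [Complex.sub_im]
        exact hpos
    · -- real rooted → stability
      intro hRR
      exact RSAux.stable_of_hypRR hf hf0 hnn hRR
  · constructor
    · intro h y _ _ z hz
      exact h y z hz
    · -- restricted → full
      intro hres y z h0
      set s : ℝ := (∑ i, y i) / n with hsdef
      set r2 : ℝ := ∑ i, (y i - s)^2 with hr2def
      by_cases hr : r2 = 0
      · -- all y i = s
        have hys : ∀ i, y i = s := by
          intro i
          have h2 : ∀ j ∈ Finset.univ, (y j - s)^2 = 0 :=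
            (Finset.sum_eq_zero_iff_of_nonneg (fun j _ => sq_nonneg (y j - s))).mp hr
          have := h2 i (Finset.mem_univ i)
          have := pow_eq_zero_iff (n := 2) (by norm_num) |>.mp this
          linarith
        have hveq : (fun i => z - ((y i : ℝ) : ℂ))
            = fun i => (z - (s:ℂ)) * ((fun _ : Fin n => ((1:ℝ) : ℂ)) i) := by
          funext i
          rw [hys i]
          push_cast
          ring
        rw [hveq, RSAux.eval_smul hf] at h0
        have h1 : (fun _ : Fin n => ((1:ℝ) : ℂ))
            = fun i : Fin n => (((fun _ => 1 : Fin n → ℝ)) i : ℂ) := rfl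
        rw [h1, RSAux.eval_real] at h0
        have h3 : 0 < MvPolynomial.eval (fun _ => (1:ℝ)) f :=
          RSAux.eval_pos hf hf0 hnn (fun _ => one_pos)
        rcases mul_eq_zero.mp h0 with h | h
        · have hd0 : d ≠ 0 := by
            intro hd
            rw [hd, pow_zero] at h
            exact one_ne_zero h
          have hz : z - (s:ℂ) = 0 := (pow_eq_zero_iff hd0).mp h
          have hzz : z = (s:ℂ) := by linear_combination hz
          rw [hzz]
          simp
        · exact absurd h (by exact_mod_cast h3.ne')
      · -- r2 > 0
        have hr2nonneg : 0 ≤ r2 := Finset.sum_nonneg fun j _ => sq_nonneg _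
        have hr2pos : 0 < r2 := lt_of_le_of_ne hr2nonneg (Ne.symm hr)
        set r : ℝ := Real.sqrt r2 with hrdef
        have hrpos : 0 < r := Real.sqrt_pos.mpr hr2pos
        have hrsq : r^2 = r2 := Real.sq_sqrt hr2nonneg
        have hn0 : (n:ℝ) ≠ 0 := by
          intro hn
          apply hr
          rw [hr2def]
          have : n = 0 := by exact_mod_cast hn
          subst this
          simp
        set yh : Fin n → ℝ := fun i => (y i - s)/r with hyhdef
        have hsum : (∑ i, yh i) = 0 := by
          rw [hyhdef]
          rw [← Finset.sum_div]
          have : (∑ i, (y i - s)) = 0 := by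
            rw [Finset.sum_sub_distrib]
            simp [hsdef]
            field_simp
            ring
          rw [this, zero_div]
        have hsq : (∑ i, (yh i)^2) = 1 := by
          rw [hyhdef]
          have : (∑ i, ((y i - s)/r)^2) = (∑ i, (y i - s)^2)/r^2 := by
            rw [Finset.sum_div]
            apply Finset.sum_congr rfl
            intro i _
            rw [div_pow]
          rw [this, hrsq, ← hr2def, div_self hr]
        set z' : ℂ := (z - (s:ℂ)) / (r:ℂ) with hz'def
        have hrC : ((r:ℝ):ℂ) ≠ 0 := by exact_mod_cast hrpos.ne'
        have h1 : MvPolynomial.eval (fun i => z' - ((yh i : ℝ) : ℂ))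
            (MvPolynomial.map (algebraMap ℝ ℂ) f) = 0 := by
          apply RSAux.rescale_zero hf hrC
          have hveq : (fun i => ((r:ℝ):ℂ) * (z' - ((yh i : ℝ) : ℂ)))
              = fun i => z - ((y i : ℝ) : ℂ) := by
            funext i
            rw [hz'def, hyhdef]
            push_cast
            field_simp
            ring
          rw [hveq]
          exact h0
        have h2 : z'.im = 0 := hres yh hsum hsq z' h1
        have h3 : z'.im = z.im / r := by
          rw [hz'def]
          simp only [Complex.div_im, Complex.sub_im, Complex.sub_re, Complex.ofReal_im,
            Complex.ofReal_re, Complex.normSq_ofReal, mul_zero, sub_zero]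
          field_simp
          ring
        rw [h3] at h2
        field_simp at h2
        simpa using h2
end

section
/- Let f_n^d(w_1,...,w_n) be the polynomial obtained from e_d(w_{11},...,w_{nd})/binom(nd, d) (elementary symmetric of degree d in nd variables) by substituting w_{ij} -> w_i for all i, j. Then for every y in R^n not parallel to (1,...,1), the univariate polynomial t -> f_n^d(t·1 - y) has only real and distinct zeros. -/
section FndAux

open Polynomial

lemma my_esymm_zero {R : Type*} [CommSemiring R] (s : Multiset R) : s.esymm 0 = 1 := by
  simp [Multiset.esymm, Multiset.powersetCard_zero_left]

lemma my_esymm_cons {R : Type*} [CommSemiring R] (a : R) (s : Multiset R) (k : ℕ) :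
    (a ::ₘ s).esymm (k + 1) = s.esymm (k + 1) + a * s.esymm k := by
  simp only [Multiset.esymm, Multiset.powersetCard_cons, Multiset.map_add, Multiset.sum_add,
    Multiset.map_map, Function.comp]
  rw [← Multiset.sum_map_mul_left]
  simp [Multiset.prod_cons]

lemma my_derivative_esymm (s : Multiset ℝ[X]) (h : ∀ p ∈ s, derivative p = 1) (k : ℕ) :
    derivative (s.esymm (k + 1)) = C ((Multiset.card s : ℝ) - k) * s.esymm k := by
  induction s using Multiset.induction generalizing k with
  | empty =>
    cases k <;>
      simp [Multiset.esymm, Multiset.powersetCard_zero_right, my_esymm_zero]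
  | cons a t ih =>
    have ha : derivative a = 1 := h a (Multiset.mem_cons_self a t)
    have ht : ∀ p ∈ t, derivative p = 1 := fun p hp => h p (Multiset.mem_cons_of_mem hp)
    cases k with
    | zero =>
      rw [my_esymm_cons, derivative_add, ih ht 0, derivative_mul, ha, my_esymm_zero]
      have hd0 : derivative (1 : ℝ[X]) = 0 := derivative_one
      simp only [my_esymm_zero, hd0, mul_zero, add_zero, mul_one, one_mul,
        Multiset.card_cons, Nat.cast_add, Nat.cast_one, Nat.cast_zero, sub_zero, my_esymm_cons]
      rw [map_add C, map_one]
    | succ j =>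
      rw [my_esymm_cons, derivative_add, ih ht (j + 1), derivative_mul, ha, ih ht j,
        my_esymm_cons]
      simp only [Multiset.card_cons, Nat.cast_add, Nat.cast_one, one_mul]
      have e1 : ((Multiset.card t : ℝ) + 1 - (j + 1)) = ((Multiset.card t : ℝ) - (j + 1)) + 1 := by
        ring
      have : (C ((Multiset.card t : ℝ) + 1 - (j + 1)) : ℝ[X])
          = C ((Multiset.card t : ℝ) - (j + 1)) + 1 := by rw [e1, map_add, map_one]
      rw [this]
      have : (C ((Multiset.card t : ℝ) - j) : ℝ[X])
          = C ((Multiset.card t : ℝ) - (j + 1)) + 1 := by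
        rw [show ((Multiset.card t : ℝ) - j) = ((Multiset.card t : ℝ) - (j+1)) + 1 by ring,
          map_add, map_one]
      rw [this]
      ring


lemma my_powersetCard_self {α : Type*} (s : Multiset α) :
    s.powersetCard (Multiset.card s) = {s} := by
  have hc : Multiset.card (s.powersetCard (Multiset.card s)) = 1 := by
    rw [Multiset.card_powersetCard, Nat.choose_self]
  rw [Multiset.card_eq_one] at hc
  obtain ⟨t, ht⟩ := hc
  have htm : t ∈ s.powersetCard (Multiset.card s) := by rw [ht]; exact Multiset.mem_singleton_self t
  rw [Multiset.mem_powersetCard] at htm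
  have : t = s := Multiset.eq_of_le_of_card_le htm.1 (le_of_eq htm.2.symm)
  rw [ht, this]

lemma my_esymm_card {R : Type*} [CommSemiring R] (s : Multiset R) :
    s.esymm (Multiset.card s) = s.prod := by
  rw [Multiset.esymm, my_powersetCard_self]
  simp

lemma my_iterate_derivative_esymm (s : Multiset ℝ[X]) (h : ∀ p ∈ s, derivative p = 1)
    (j : ℕ) (hj : j ≤ Multiset.card s)
    (hD : ∀ (t : Multiset ℝ[X]), (∀ p ∈ t, derivative p = 1) → ∀ k,
      derivative (t.esymm (k + 1)) = C ((Multiset.card t : ℝ) - k) * t.esymm k) :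
    derivative^[j] s.prod = C ((j.factorial : ℝ)) * s.esymm (Multiset.card s - j) := by
  induction j with
  | zero => simp [my_esymm_card]
  | succ i ih =>
    have hi : i ≤ Multiset.card s := Nat.le_of_succ_le hj
    rw [Function.iterate_succ_apply', ih hi, derivative_C_mul]
    have e1 : Multiset.card s - i = (Multiset.card s - (i + 1)) + 1 := by omega
    rw [e1, hD s h (Multiset.card s - (i + 1))]
    have e2 : ((Multiset.card s : ℝ) - (Multiset.card s - (i + 1) : ℕ)) = (i + 1 : ℕ) := by
      have h3 : (Multiset.card s - (i + 1) : ℕ) + (i + 1) = Multiset.card s := by omega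
      have h4 := congrArg (fun m : ℕ => (m : ℝ)) h3
      push_cast at h4
      push_cast
      linarith
    rw [e2, ← mul_assoc, ← map_mul]
    congr 2
    push_cast [Nat.factorial_succ]
    ring


lemma my_eval_derivs (z : ℝ) (s : Multiset ℝ) (hs : ∀ r ∈ s, z - r ≠ 0) :
    eval z (derivative (s.map (fun r => X - C r)).prod)
        = eval z (s.map (fun r => X - C r)).prod * (s.map (fun r => (z - r)⁻¹)).sum ∧
      eval z (derivative (derivative (s.map (fun r => X - C r)).prod))
        = eval z (s.map (fun r => X - C r)).prod *
            ((s.map (fun r => (z - r)⁻¹)).sum ^ 2 - (s.map (fun r => ((z - r)⁻¹) ^ 2)).sum) := by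
  induction s using Multiset.induction with
  | empty => simp
  | cons a t ih =>
    have ha : z - a ≠ 0 := hs a (Multiset.mem_cons_self a t)
    obtain ⟨E1, E2⟩ := ih (fun r hr => hs r (Multiset.mem_cons_of_mem hr))
    simp only [Multiset.map_cons, Multiset.prod_cons, Multiset.sum_cons, derivative_mul,
      derivative_sub, derivative_X, derivative_C, sub_zero, one_mul, derivative_add,
      eval_add, eval_mul, eval_sub, eval_X, eval_C] at *
    constructor
    · rw [E1]; field_simp
    · rw [E1, E2]; field_simp; ring

lemma my_key_ineq (p : ℝ[X]) (hroots : Multiset.card p.roots = p.natDegree)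
    (hdeg : 1 ≤ p.natDegree) (z : ℝ) (hz : eval z p ≠ 0) :
    eval z p * eval z (derivative (derivative p)) < eval z (derivative p) ^ 2 := by
  have hp0 : p ≠ 0 := by
    intro h; rw [h] at hdeg; simp at hdeg
  have hfac := C_leadingCoeff_mul_prod_multiset_X_sub_C hroots
  have hs : ∀ r ∈ p.roots, z - r ≠ 0 := by
    intro r hr h0
    have hzr : z = r := by linarith
    subst hzr
    exact hz ((mem_roots hp0).mp hr)
  obtain ⟨E1, E2⟩ := my_eval_derivs z p.roots hs
  set lc := p.leadingCoeff with hlcdef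
  have hlc : lc ≠ 0 := leadingCoeff_ne_zero.mpr hp0
  set Q : ℝ[X] := (p.roots.map (fun r => X - C r)).prod with hQ
  have hA : eval z Q ≠ 0 := by
    rw [hQ, eval_multiset_prod]
    refine Multiset.prod_ne_zero ?_
    intro h0
    rw [Multiset.mem_map] at h0
    obtain ⟨q, hq, hq0⟩ := h0
    rw [Multiset.mem_map] at hq
    obtain ⟨r, hr, rfl⟩ := hq
    rw [eval_sub, eval_X, eval_C] at hq0
    exact hs r hr hq0
  have hep : eval z p = lc * eval z Q := by
    conv_lhs => rw [← hfac]
    simp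
  have hdp : derivative p = C lc * derivative Q := by
    conv_lhs => rw [← hfac, derivative_C_mul]
  have hddp : derivative (derivative p) = C lc * derivative (derivative Q) := by
    rw [hdp, derivative_C_mul]
  have hS2pos : 0 < (p.roots.map (fun r => ((z - r)⁻¹) ^ 2)).sum := by
    have hne : p.roots ≠ 0 := by
      intro h0
      rw [h0] at hroots
      simp at hroots
      omega
    obtain ⟨a, haa⟩ := Multiset.exists_mem_of_ne_zero hne
    obtain ⟨t, hts⟩ := Multiset.exists_cons_of_mem haa
    rw [hts, Multiset.map_cons, Multiset.sum_cons]
    have h1 : 0 < ((z - a)⁻¹) ^ 2 :=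
      pow_two_pos_of_ne_zero (inv_ne_zero (hs a haa))
    have h2 : 0 ≤ (Multiset.map (fun r => ((z - r)⁻¹) ^ 2) t).sum := by
      refine Multiset.sum_nonneg ?_
      intro x hx
      rw [Multiset.mem_map] at hx
      obtain ⟨r, _, rfl⟩ := hx
      positivity
    linarith
  set S := (Multiset.map (fun r => (z - r)⁻¹) p.roots).sum
  set S2 := (Multiset.map (fun r => ((z - r)⁻¹) ^ 2) p.roots).sum
  have hdiff : eval z p * eval z (derivative (derivative p)) - eval z (derivative p) ^ 2
      = -(lc ^ 2 * eval z Q ^ 2 * S2) := by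
    rw [hep, hddp, hdp, eval_mul, eval_mul, eval_C, E1, E2]
    ring
  have hpos : 0 < lc ^ 2 * eval z Q ^ 2 * S2 :=
    mul_pos (mul_pos (pow_two_pos_of_ne_zero hlc) (pow_two_pos_of_ne_zero hA)) hS2pos
  linarith


lemma my_step (p : ℝ[X]) (h : Multiset.card p.roots = p.natDegree) (h1 : 1 ≤ p.natDegree) :
    Multiset.card (derivative p).roots = (derivative p).natDegree ∧
      (derivative p).natDegree = p.natDegree - 1 ∧
      ∀ z : ℝ, rootMultiplicity z (derivative p) ≤ max 1 (rootMultiplicity z p - 1) := by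
  have A := p.card_roots_le_derivative
  have B := card_roots' (derivative p)
  have Cle := natDegree_derivative_le p
  refine ⟨by omega, by omega, ?_⟩
  intro z
  by_cases hz : p.IsRoot z
  · rw [derivative_rootMultiplicity_of_root hz]
    exact le_max_right _ _
  · have hm0 : rootMultiplicity z p = 0 := rootMultiplicity_eq_zero hz
    rw [hm0]
    simp only [Nat.zero_sub, max_self, Nat.le_refl]
    by_contra hc
    push_neg at hc
    have h2 : 2 ≤ rootMultiplicity z (derivative p) := by omega
    have hd0 : derivative p ≠ 0 := by
      intro h0; rw [h0, rootMultiplicity_zero] at h2; omega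
    have hr1 : (derivative p).IsRoot z :=
      (rootMultiplicity_pos hd0).mp (by omega)
    have hr2 : (derivative (derivative p)).IsRoot z := by
      have := derivative_rootMultiplicity_of_root hr1
      have hdd0 : derivative (derivative p) ≠ 0 := by
        intro h0; rw [h0, rootMultiplicity_zero] at this; omega
      exact (rootMultiplicity_pos hdd0).mp (by omega)
    have hk := my_key_ineq p h h1 z hz
    rw [hr1, hr2] at hk
    simp at hk


lemma my_iter (k : ℕ) : ∀ p : ℝ[X], Multiset.card p.roots = p.natDegree → k < p.natDegree →
    Multiset.card (derivative^[k] p).roots = (derivative^[k] p).natDegree ∧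
      (derivative^[k] p).natDegree = p.natDegree - k ∧
      ∀ z : ℝ, rootMultiplicity z (derivative^[k] p) ≤ max 1 (rootMultiplicity z p - k) := by
  induction k with
  | zero =>
    intro p hp _
    refine ⟨hp, by simp, fun z => ?_⟩
    simp only [Function.iterate_zero_apply, Nat.sub_zero]
    omega
  | succ i ih =>
    intro p hp hk
    obtain ⟨s1, s2, s3⟩ := my_step p hp (by omega)
    have hlt : i < (derivative p).natDegree := by omega
    obtain ⟨t1, t2, t3⟩ := ih (derivative p) s1 hlt
    rw [Function.iterate_succ_apply] at *
    refine ⟨t1, by omega, fun z => ?_⟩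
    have := t3 z
    have := s3 z
    omega

end FndAux


open MvPolynomial Polynomial

/-- `f_n^d` is obtained from `e_d(w₁₁, …, w_{nd}) / binom(nd, d)` (the elementary symmetric
polynomial of degree `d` in `n·d` variables) by substituting `w_{ij} ↦ w_i`. -/
noncomputable def fnd (n d : ℕ) : MvPolynomial (Fin n) ℝ :=
  MvPolynomial.C (((n * d).choose d : ℝ))⁻¹ *
    MvPolynomial.rename (Prod.fst : Fin n × Fin d → Fin n)
      (MvPolynomial.esymm (Fin n × Fin d) ℝ d)

/-- For `1 ≤ d ≤ n` and every `y ∈ ℝⁿ` not parallel to `(1,…,1)`, the univariate polynomial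
`t ↦ f_n^d(t·1 - y)` has only real and distinct zeros: it is squarefree and all its complex
roots are real. -/
theorem fnd_real_distinct_roots (n d : ℕ) (hd : 1 ≤ d) (hdn : d ≤ n)
    (y : Fin n → ℝ) (hy : ∀ c : ℝ, y ≠ fun _ => c) :
    (∀ z : ℂ,
        ((MvPolynomial.aeval (fun i : Fin n => (Polynomial.X - Polynomial.C (y i) : Polynomial ℝ))
            (fnd n d)).map (algebraMap ℝ ℂ)).IsRoot z → z.im = 0) ∧
    Squarefree (MvPolynomial.aeval
        (fun i : Fin n => (Polynomial.X - Polynomial.C (y i) : Polynomial ℝ)) (fnd n d)) := by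
  classical
  have hn : 0 < n := hd.trans hdn
  set N := n * d with hN
  have hdN : d ≤ N := Nat.le_mul_of_pos_left d hn
  set g : Fin n → ℝ[X] := fun i => Polynomial.X - Polynomial.C (y i) with hg
  set M : Multiset ℝ := (Finset.univ.val : Multiset (Fin n × Fin d)).map (fun ij => y ij.1)
    with hM
  set P : Multiset ℝ[X] := M.map (fun r => Polynomial.X - Polynomial.C r) with hP
  have hcardM : Multiset.card M = N := by
    rw [hM, Multiset.card_map]
    simp [hN]
  have hcardP : Multiset.card P = N := by rw [hP, Multiset.card_map, hcardM]
  have hder : ∀ p ∈ P, derivative p = 1 := by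
    intro p hp
    rw [hP, Multiset.mem_map] at hp
    obtain ⟨r, _, rfl⟩ := hp
    simp
  -- the polynomial q
  set q : ℝ[X] := MvPolynomial.aeval g (fnd n d) with hqdef
  have hq : q = Polynomial.C ((N.choose d : ℝ))⁻¹ * P.esymm d := by
    rw [hqdef, fnd, map_mul, MvPolynomial.aeval_C, MvPolynomial.aeval_rename,
      MvPolynomial.aeval_esymm_eq_multiset_esymm]
    congr 1
    rw [show (Multiset.map (g ∘ Prod.fst) Finset.univ.val) = P from by
        rw [hP, hM, Multiset.map_map]; rfl]
  -- relate esymm to iterated derivative of the product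
  have hiter := my_iterate_derivative_esymm P hder (N - d) (by omega) my_derivative_esymm
  rw [hcardP, show N - (N - d) = d by omega] at hiter
  set p0 : ℝ[X] := P.prod with hp0def
  have hrootsp0 : p0.roots = M := by
    rw [hp0def, hP]
    exact roots_multiset_prod_X_sub_C M
  have hdegp0 : p0.natDegree = N := by
    rw [hp0def, hP, natDegree_multiset_prod_X_sub_C_eq_card, hcardM]
  have hrr : Multiset.card p0.roots = p0.natDegree := by rw [hrootsp0, hcardM, hdegp0]
  -- apply the iterated real-rootedness result
  obtain ⟨u1, u2, u3⟩ := my_iter (N - d) p0 hrr (by omega)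
  set D : ℝ[X] := derivative^[N - d] p0 with hD
  rw [hdegp0, show N - (N - d) = d by omega] at u2
  -- multiplicity bound for p0
  have hmult : ∀ z : ℝ, rootMultiplicity z p0 ≤ N - d := by
    intro z
    have h1 : rootMultiplicity z p0 = Multiset.count z M := by
      rw [← hrootsp0, count_roots]
    have h2 : Multiset.count z M
        = (Finset.univ.filter (fun ij : Fin n × Fin d => z = y ij.1)).card := by
      rw [hM, Multiset.count_map]
      rfl
    have h3 : (Finset.univ.filter (fun ij : Fin n × Fin d => z = y ij.1))
        = (Finset.univ.filter (fun i : Fin n => z = y i)) ×ˢ (Finset.univ : Finset (Fin d)) := by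
      ext ⟨i, j⟩
      simp [Finset.mem_filter, Finset.mem_product]
    have h4 : (Finset.univ.filter (fun i : Fin n => z = y i)).card ≤ n - 1 := by
      by_contra hcon
      push_neg at hcon
      have hle : (Finset.univ.filter (fun i : Fin n => z = y i)).card ≤ n := by
        simpa using Finset.card_filter_le Finset.univ (fun i : Fin n => z = y i)
      have heq : (Finset.univ.filter (fun i : Fin n => z = y i)).card = n := by omega
      have huniv := Finset.eq_univ_of_card (Finset.univ.filter (fun i : Fin n => z = y i))
          (by simpa using heq)
      have hall : ∀ i : Fin n, y i = z := by
        intro i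
        have hi : i ∈ Finset.univ.filter (fun i : Fin n => z = y i) := by
          rw [huniv]; exact Finset.mem_univ i
        exact ((Finset.mem_filter.mp hi).2).symm
      exact hy z (funext hall)
    rw [h1, h2, h3, Finset.card_product]
    have : (Finset.univ.filter (fun i : Fin n => z = y i)).card * (Finset.univ : Finset (Fin d)).card
        ≤ (n - 1) * d := by
      apply Nat.mul_le_mul h4
      simp
    calc _ ≤ (n - 1) * d := this
      _ = N - d := by rw [hN, tsub_mul, one_mul, mul_comm]
  have hmultD : ∀ z : ℝ, rootMultiplicity z D ≤ 1 := by
    intro z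
    have := u3 z
    have := hmult z
    omega
  -- q as a constant multiple of D
  have hfact0 : ((N - d).factorial : ℝ) ≠ 0 := Nat.cast_ne_zero.mpr (Nat.factorial_ne_zero _)
  have hchoose0 : ((N.choose d : ℝ)) ≠ 0 :=
    Nat.cast_ne_zero.mpr (Nat.choose_pos hdN).ne'
  set c1 : ℝ := ((N.choose d : ℝ))⁻¹ * (((N - d).factorial : ℝ))⁻¹ with hc1def
  have hc1 : c1 ≠ 0 := mul_ne_zero (inv_ne_zero hchoose0) (inv_ne_zero hfact0)
  have hqD : q = Polynomial.C c1 * D := by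
    rw [hq, hc1def, map_mul, mul_assoc]
    congr 1
    rw [hiter, ← mul_assoc, ← map_mul, inv_mul_cancel₀ hfact0, map_one, one_mul]
  have hD0 : D ≠ 0 := by
    intro h0
    rw [h0, natDegree_zero] at u2
    omega
  have hq0 : q ≠ 0 := by
    rw [hqD]
    exact mul_ne_zero (by simpa using hc1) hD0
  have hrootsq : q.roots = D.roots := by rw [hqD]; exact roots_C_mul D hc1
  have hdegq : q.natDegree = D.natDegree := by
    rw [hqD, natDegree_mul (by simpa using hc1) hD0, natDegree_C, zero_add]
  have hcardq : Multiset.card q.roots = q.natDegree := by rw [hrootsq, hdegq]; exact u1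
  have hsplits : q.Splits := splits_iff_card_roots.mpr hcardq
  have hnodup : q.roots.Nodup := by
    rw [Multiset.nodup_iff_count_le_one]
    intro z
    rw [hrootsq, count_roots]
    exact hmultD z
  have hsep : q.Separable := (nodup_roots_iff_of_splits hq0 hsplits).mp hnodup
  constructor
  · intro z hz
    have hmapne : q.map (algebraMap ℝ ℂ) ≠ 0 := map_ne_zero hq0
    have hzr : z ∈ (q.map (algebraMap ℝ ℂ)).roots := (mem_roots hmapne).mpr hz
    rw [hsplits.roots_map] at hzr
    rw [Multiset.mem_map] at hzr
    obtain ⟨r, _, hr⟩ := hzr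
    rw [← hr]
    simp
  · exact hsep.squarefree
end

section
/- Let q(t) = at^2 + bt + c be a real quadratic arising as q(t) = f(t·1 - y) for a quadratic form f(w) = w M w^T /2 with symmetric matrix M, where y in R^m is not parallel to 1 = (1,...,1). If M has signature (+,-,...,-) (one positive, m-1 negative eigenvalues) and 1·M·1^T > 0, then q has two real and distinct zeros. -/
open Matrix

open Finset in
lemma key_neg (m : ℕ) (lam E Z : Fin m → ℝ) (i₀ : Fin m)
    (h0 : 0 < lam i₀) (hneg : ∀ i, i ≠ i₀ → lam i < 0)
    (ha : 0 < ∑ i, lam i * (E i * E i))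
    (horth : ∑ i, lam i * (E i * Z i) = 0)
    (hZ : Z ≠ 0) :
    ∑ i, lam i * (Z i * Z i) < 0 := by
  by_contra h
  push_neg at h
  set s : Finset (Fin m) := Finset.univ.erase i₀ with hs
  have hsplit : ∀ f : Fin m → ℝ, ∑ i, f i = f i₀ + ∑ i ∈ s, f i := fun f => by
    rw [hs, Finset.add_sum_erase _ f (Finset.mem_univ i₀)]
  have hmu : ∀ i ∈ s, 0 < -lam i := by
    intro i hi
    have := hneg i (Finset.ne_of_mem_erase hi)
    linarith
  set S1 : ℝ := ∑ i ∈ s, (-lam i) * (E i * Z i) with hS1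
  set S2 : ℝ := ∑ i ∈ s, (-lam i) * (E i * E i) with hS2
  set S3 : ℝ := ∑ i ∈ s, (-lam i) * (Z i * Z i) with hS3
  have hE : S2 < lam i₀ * (E i₀ * E i₀) := by
    have h1 := hsplit (fun i => lam i * (E i * E i))
    simp only [neg_mul, Finset.sum_neg_distrib, hS2]
    rw [h1] at ha; linarith
  have hL : lam i₀ * (E i₀ * Z i₀) = S1 := by
    have h1 := hsplit (fun i => lam i * (E i * Z i))
    simp only [neg_mul, Finset.sum_neg_distrib, hS1]
    rw [h1] at horth; linarith
  have hQ : S3 ≤ lam i₀ * (Z i₀ * Z i₀) := by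
    have h1 := hsplit (fun i => lam i * (Z i * Z i))
    simp only [neg_mul, Finset.sum_neg_distrib, hS3]
    rw [h1] at h; linarith
  have hS2n : 0 ≤ S2 := Finset.sum_nonneg fun i hi =>
    mul_nonneg (hmu i hi).le (mul_self_nonneg _)
  have hS3n : 0 ≤ S3 := Finset.sum_nonneg fun i hi =>
    mul_nonneg (hmu i hi).le (mul_self_nonneg _)
  have cs : S1 ^ 2 ≤ S2 * S3 := by
    have := Finset.sum_mul_sq_le_sq_mul_sq s
      (fun i => Real.sqrt (-lam i) * E i) (fun i => Real.sqrt (-lam i) * Z i)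
    have e1 : ∀ i ∈ s, (Real.sqrt (-lam i) * E i) * (Real.sqrt (-lam i) * Z i)
        = (-lam i) * (E i * Z i) := by
      intro i hi
      have hh := Real.mul_self_sqrt (hmu i hi).le
      calc (Real.sqrt (-lam i) * E i) * (Real.sqrt (-lam i) * Z i)
          = (Real.sqrt (-lam i) * Real.sqrt (-lam i)) * (E i * Z i) := by ring
        _ = (-lam i) * (E i * Z i) := by rw [hh]
    have e2 : ∀ i ∈ s, (Real.sqrt (-lam i) * E i) ^ 2 = (-lam i) * (E i * E i) := by
      intro i hi
      rw [mul_pow, Real.sq_sqrt (hmu i hi).le]; ring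
    have e3 : ∀ i ∈ s, (Real.sqrt (-lam i) * Z i) ^ 2 = (-lam i) * (Z i * Z i) := by
      intro i hi
      rw [mul_pow, Real.sq_sqrt (hmu i hi).le]; ring
    rwa [Finset.sum_congr rfl e1, Finset.sum_congr rfl e2, Finset.sum_congr rfl e3] at this
  rcases eq_or_lt_of_le hS3n with h3 | h3
  · -- S3 = 0 : all Z i = 0 on s
    have hsum0 : S3 = 0 := h3.symm
    rw [hS3] at hsum0
    have hz0 : ∀ i ∈ s, -lam i * (Z i * Z i) = 0 :=
      (Finset.sum_eq_zero_iff_of_nonneg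
        (fun i hi => mul_nonneg (hmu i hi).le (mul_self_nonneg _))).mp hsum0
    have hzi : ∀ i ∈ s, Z i = 0 := by
      intro i hi
      have := hz0 i hi
      have hμ := hmu i hi
      rcases mul_eq_zero.mp this with h' | h'
      · exact absurd h' (ne_of_gt hμ)
      · exact mul_self_eq_zero.mp h' 
    have hZ0 : Z i₀ ≠ 0 := by
      intro hc
      apply hZ
      funext i
      by_cases hii : i = i₀
      · rw [hii, hc]; rfl
      · exact hzi i (Finset.mem_erase.mpr ⟨hii, Finset.mem_univ i⟩)
    have hS1z : S1 = 0 := by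
      apply Finset.sum_eq_zero
      intro i hi
      rw [hzi i hi]; ring
    have hE0 : E i₀ = 0 := by
      have := hL
      rw [hS1z] at this
      rcases mul_eq_zero.mp this with h' | h'
      · exact absurd h' (ne_of_gt h0)
      · rcases mul_eq_zero.mp h' with h'' | h''
        · exact h''
        · exact absurd h'' hZ0
    rw [hE0] at hE
    simp at hE
    linarith
  · -- S3 > 0
    have hPpos : 0 < lam i₀ * (E i₀ * E i₀) := lt_of_le_of_lt hS2n hE
    have hPQ : (lam i₀ * (E i₀ * E i₀)) * (lam i₀ * (Z i₀ * Z i₀))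
        = (lam i₀ * (E i₀ * Z i₀)) ^ 2 := by ring
    rw [hL] at hPQ
    have c1 : S2 * S3 < (lam i₀ * (E i₀ * E i₀)) * S3 := mul_lt_mul_of_pos_right hE h3
    have c2 : (lam i₀ * (E i₀ * E i₀)) * S3 ≤ (lam i₀ * (E i₀ * E i₀)) * (lam i₀ * (Z i₀ * Z i₀)) :=
      mul_le_mul_of_nonneg_left hQ hPpos.le
    linarith

/-- Let `f(w) = w M wᵀ / 2` be a quadratic form with real symmetric matrix `M` of Lorentzian
signature `(+,-,…,-)` (one positive and `m-1` negative eigenvalues), and suppose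
`1·M·1ᵀ > 0`. Then for every `y ∈ ℝᵐ` not parallel to `1 = (1,…,1)`, the real quadratic
`q(t) = f(t·1 - y)` has two real and distinct zeros. -/
theorem lorentzian_quadratic_two_distinct_roots (m : ℕ)
    (M : Matrix (Fin m) (Fin m) ℝ) (hM : M.IsHermitian)
    (hsig : ∃ i₀ : Fin m, 0 < hM.eigenvalues i₀ ∧ ∀ i, i ≠ i₀ → hM.eigenvalues i < 0)
    (hpos : 0 < dotProduct (fun _ => (1 : ℝ)) (M *ᵥ fun _ => (1 : ℝ)))
    (y : Fin m → ℝ) (hy : ∀ c : ℝ, y ≠ fun _ => c) :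
    ∃ t₁ t₂ : ℝ, t₁ ≠ t₂ ∧
      dotProduct (fun i => t₁ - y i) (M *ᵥ fun i => t₁ - y i) / 2 = 0 ∧
      dotProduct (fun i => t₂ - y i) (M *ᵥ fun i => t₂ - y i) / 2 = 0 := by
  obtain ⟨i₀, h0, hneg⟩ := hsig
  set U : Matrix (Fin m) (Fin m) ℝ := (hM.eigenvectorUnitary : Matrix (Fin m) (Fin m) ℝ) with hUdef
  set lam : Fin m → ℝ := hM.eigenvalues with hlam
  set φ : (Fin m → ℝ) → (Fin m → ℝ) := fun v => star U *ᵥ v with hφ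
  have hstar : star U = Uᵀ := by
    ext i j
    simp [conjTranspose_apply]
  have hexp : ∀ u w : Fin m → ℝ,
      dotProduct u (M *ᵥ w) = ∑ i, lam i * (φ u i * φ w i) := by
    intro u w
    conv_lhs => rw [hM.spectral_theorem]
    rw [RCLike.ofReal_real_eq_id]
    show dotProduct u ((U * diagonal (id ∘ lam) * star U) *ᵥ w) = _
    rw [← mulVec_mulVec, ← mulVec_mulVec, dotProduct_mulVec, ← mulVec_transpose, ← hstar]
    simp only [hφ, dotProduct, mulVec_diagonal, Function.comp_apply, id_eq]
    exact Finset.sum_congr rfl fun i _ => by ring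
  have hUU : U * star U = 1 := mem_unitaryGroup_iff.mp hM.eigenvectorUnitary.2
  have hφinj : Function.Injective φ := by
    intro v w hvw
    have h1 : U *ᵥ φ v = U *ᵥ φ w := by rw [hvw]
    simpa [hφ, mulVec_mulVec, hUU, one_mulVec] using h1
  set one : Fin m → ℝ := fun _ => 1 with hone
  set E : Fin m → ℝ := φ one with hE
  set Y : Fin m → ℝ := φ y with hY
  set a : ℝ := ∑ i, lam i * (E i * E i) with hadef
  set b : ℝ := ∑ i, lam i * (E i * Y i) with hbdef
  set c : ℝ := ∑ i, lam i * (Y i * Y i) with hcdef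
  have ha : 0 < a := by rw [hadef]; rw [hexp one one] at hpos; exact hpos
  have hane : a ≠ 0 := ne_of_gt ha
  set k : ℝ := b / a with hk
  set Z : Fin m → ℝ := fun i => Y i - k * E i with hZdef
  have horth : ∑ i, lam i * (E i * Z i) = 0 := by
    have h1 : ∀ i ∈ Finset.univ, lam i * (E i * Z i)
        = lam i * (E i * Y i) - k * (lam i * (E i * E i)) := fun i _ => by
      simp only [hZdef]; ring
    rw [Finset.sum_congr rfl h1, Finset.sum_sub_distrib, ← Finset.mul_sum, ← hbdef, ← hadef, hk]
    field_simp
    ring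
  have hZne : Z ≠ 0 := by
    intro hzz
    apply hy k
    apply hφinj
    have : Y = fun i => k * E i := by
      funext i
      have := congrFun hzz i
      simp only [hZdef, Pi.zero_apply] at this
      linarith
    show φ y = φ (fun _ => k)
    rw [← hY, this]
    have : (fun _ => k : Fin m → ℝ) = k • one := by funext i; simp [hone]
    rw [this, hφ]
    simp only [mulVec_smul]
    funext i
    simp [hE, hφ]
  have hzz : ∑ i, lam i * (Z i * Z i) < 0 := by
    apply key_neg m lam E Z i₀ h0 hneg _ horth hZne
    rw [← hadef]; exact ha
  have hsumZ : ∑ i, lam i * (Z i * Z i) = c - 2 * k * b + k ^ 2 * a := by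
    have h1 : ∀ i ∈ Finset.univ, lam i * (Z i * Z i)
        = lam i * (Y i * Y i) - 2 * k * (lam i * (E i * Y i))
          + k ^ 2 * (lam i * (E i * E i)) := fun i _ => by
      simp only [hZdef]; ring
    rw [Finset.sum_congr rfl h1, Finset.sum_add_distrib, Finset.sum_sub_distrib,
      ← Finset.mul_sum, ← Finset.mul_sum, ← hadef, ← hbdef, ← hcdef]
  have hka : k * a = b := by rw [hk]; field_simp
  have hd : a * c < b ^ 2 := by
    rw [hsumZ] at hzz
    nlinarith [mul_lt_mul_of_pos_left hzz ha, hka]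
  -- the quadratic
  have hq : ∀ t : ℝ, dotProduct (fun i => t - y i) (M *ᵥ fun i => t - y i)
      = a * t ^ 2 - 2 * b * t + c := by
    intro t
    rw [hexp]
    have hφt : φ (fun i => t - y i) = fun i => t * E i - Y i := by
      have h1 : (fun i => t - y i) = t • one - y := by funext i; simp [hone]
      rw [h1, hφ]
      show star U *ᵥ (t • one - y) = _
      rw [mulVec_sub, mulVec_smul]
      funext i
      simp [hE, hY, hφ]
    rw [hφt]
    have h2 : ∀ i ∈ Finset.univ, lam i * ((t * E i - Y i) * (t * E i - Y i))
        = t ^ 2 * (lam i * (E i * E i)) - 2 * t * (lam i * (E i * Y i))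
          + lam i * (Y i * Y i) := fun i _ => by ring
    rw [Finset.sum_congr rfl h2, Finset.sum_add_distrib, Finset.sum_sub_distrib,
      ← Finset.mul_sum, ← Finset.mul_sum, ← hadef, ← hbdef, ← hcdef]
    ring
  set d : ℝ := b ^ 2 - a * c with hddef
  have hd0 : 0 < d := by rw [hddef]; linarith
  set s : ℝ := Real.sqrt d with hsdef
  have hs2 : s ^ 2 = d := Real.sq_sqrt hd0.le
  have hs2' : s ^ 2 = b ^ 2 - a * c := by rw [hs2, hddef]
  have hspos : 0 < s := Real.sqrt_pos.mpr hd0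
  refine ⟨(b + s) / a, (b - s) / a, ?_, ?_, ?_⟩
  · intro hteq
    rw [div_eq_div_iff hane hane] at hteq
    nlinarith [hteq, hspos, ha]
  · rw [hq]
    have : a * ((b + s) / a) ^ 2 - 2 * b * ((b + s) / a) + c = 0 := by
      field_simp
      linear_combination hs2' 
    rw [this]; norm_num
  · rw [hq]
    have : a * ((b - s) / a) ^ 2 - 2 * b * ((b - s) / a) + c = 0 := by
      field_simp
      linear_combination hs2' 
    rw [this]; norm_num
end
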